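/- arXiv:0904.1885 — 5 statements merged into one kernel-verified Lean document; each statement's English description precedes it below -/
import Mathlib

section
/- Let K(m) be a family of symmetric positive definite n×n matrices (m ≥ 1) satisfying xᵀK(m)x ≥ xᵀK(1)x ≥ m⁻¹ xᵀK(m)x for all x, and suppose the diagonals satisfy the same inequalities: xᵀ diag(K(m)) x ≥ xᵀ diag(K(1)) x ≥ m⁻¹ xᵀ diag(K(m)) x. Let A(m) = (diag K(m))^{-1/2} K(m) (diag K(m))^{-1/2} be the symmetrically scaled matrix and C₁ = λ_min(A(1)). Then λ_min(A(m)) ≥ C₁·m⁻¹ for all m ≥ 1. -/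
open Matrix

lemma quad_lower_of_le_eigenvalues {n : ℕ} {A : Matrix (Fin n) (Fin n) ℝ}
    (hA : A.IsHermitian) {c : ℝ} (hc : ∀ i, c ≤ hA.eigenvalues i) (x : Fin n → ℝ) :
    c * (∑ i, x i ^ 2) ≤ x ⬝ᵥ A.mulVec x := by
  set U := (hA.eigenvectorUnitary : Matrix (Fin n) (Fin n) ℝ) with hU
  have hUU : U * star U = 1 := (Matrix.mem_unitaryGroup_iff).mp hA.eigenvectorUnitary.2
  set y := (star U) *ᵥ x with hy
  have key : x ⬝ᵥ A.mulVec x = ∑ i, hA.eigenvalues i * y i ^ 2 := by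
    conv_lhs => rw [hA.spectral_theorem]
    rw [Unitary.conjStarAlgAut_apply, ← mulVec_mulVec, ← mulVec_mulVec, dotProduct_mulVec, ← mulVec_transpose]
    have hUT : Uᵀ = star U := by
      ext i j; simp [Matrix.star_apply, Matrix.conjTranspose_apply]
    rw [hUT, ← hy]
    simp only [mulVec_diagonal, dotProduct]
    refine Finset.sum_congr rfl fun i _ => ?_
    simp [mulVec_diagonal]
    ring
  have keyn : ∑ i, x i ^ 2 = ∑ i, y i ^ 2 := by
    have : x ⬝ᵥ x = y ⬝ᵥ y := by
      rw [hy, dotProduct_mulVec, ← mulVec_transpose]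
      have hUT : (star U)ᵀ = U := by
        ext i j; simp [Matrix.star_apply, Matrix.conjTranspose_apply]
      rw [hUT, mulVec_mulVec, hUU, one_mulVec]
    simpa [dotProduct, sq] using this
  rw [key, keyn, Finset.mul_sum]
  exact Finset.sum_le_sum fun i _ => mul_le_mul_of_nonneg_right (hc i) (sq_nonneg _)

lemma eigenvalue_lower_of_quad {n : ℕ} {A : Matrix (Fin n) (Fin n) ℝ}
    (hA : A.IsHermitian) {c : ℝ}
    (h : ∀ x : Fin n → ℝ, c * (∑ i, x i ^ 2) ≤ x ⬝ᵥ A.mulVec x) (i : Fin n) :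
    c ≤ hA.eigenvalues i := by
  set v : Fin n → ℝ := ⇑(hA.eigenvectorBasis i) with hv
  have hnorm : ∑ j, v j ^ 2 = 1 := by
    have h1 := hA.eigenvectorBasis.orthonormal.1 i
    have : (inner ℝ (hA.eigenvectorBasis i) (hA.eigenvectorBasis i) : ℝ) = 1 := by
      rw [real_inner_self_eq_norm_sq, h1]; norm_num
    simp only [PiLp.inner_apply, RCLike.inner_apply, conj_trivial] at this
    simpa [PiLp.inner_apply, sq] using this
  have hev : hA.eigenvalues i = v ⬝ᵥ A.mulVec v := by
    have := hA.eigenvalues_eq i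
    simpa using this
  calc c = c * (∑ j, v j ^ 2) := by rw [hnorm, mul_one]
    _ ≤ v ⬝ᵥ A.mulVec v := h v
    _ = hA.eigenvalues i := hev.symm

lemma scaled_quad {n : ℕ} (M B : Matrix (Fin n) (Fin n) ℝ) (hd : ∀ i, 0 < M i i)
    (hB : ∀ i j, B i j = (Real.sqrt (M i i))⁻¹ * M i j * (Real.sqrt (M j j))⁻¹)
    (x : Fin n → ℝ) :
    x ⬝ᵥ B.mulVec x
      = (fun j => (Real.sqrt (M j j))⁻¹ * x j) ⬝ᵥ
          M.mulVec (fun j => (Real.sqrt (M j j))⁻¹ * x j)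
    ∧ (∑ i, x i ^ 2) = ∑ i, M i i * ((Real.sqrt (M i i))⁻¹ * x i) ^ 2 := by
  have hs : ∀ i, (0:ℝ) < Real.sqrt (M i i) := fun i => Real.sqrt_pos.mpr (hd i)
  constructor
  · simp only [dotProduct, mulVec, dotProduct]
    refine Finset.sum_congr rfl fun i _ => ?_
    rw [Finset.mul_sum, Finset.mul_sum]
    refine Finset.sum_congr rfl fun j _ => ?_
    rw [hB]; ring
  · refine Finset.sum_congr rfl fun i _ => ?_
    have : Real.sqrt (M i i) ^ 2 = M i i := Real.sq_sqrt (hd i).le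
    rw [mul_pow, inv_pow, Real.sq_sqrt (hd i).le, ← mul_assoc,
      mul_inv_cancel₀ (hd i).ne', one_mul]

theorem diag_scaled_lambda_min_lower_bound {n : ℕ}
    (K A : ℝ → Matrix (Fin n) (Fin n) ℝ)
    (hKpd : ∀ m, 1 ≤ m → (K m).PosDef)
    (hdpos : ∀ m, 1 ≤ m → ∀ i, 0 < K m i i)
    (hquad : ∀ m, 1 ≤ m → ∀ x : Fin n → ℝ,
      x ⬝ᵥ (K 1).mulVec x ≤ x ⬝ᵥ (K m).mulVec x ∧
      m⁻¹ * (x ⬝ᵥ (K m).mulVec x) ≤ x ⬝ᵥ (K 1).mulVec x)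
    (hdquad : ∀ m, 1 ≤ m → ∀ x : Fin n → ℝ,
      (∑ i, K 1 i i * (x i) ^ 2) ≤ (∑ i, K m i i * (x i) ^ 2) ∧
      m⁻¹ * (∑ i, K m i i * (x i) ^ 2) ≤ (∑ i, K 1 i i * (x i) ^ 2))
    (hAdef : ∀ m i j,
      A m i j = (Real.sqrt (K m i i))⁻¹ * K m i j * (Real.sqrt (K m j j))⁻¹)
    (hAherm : ∀ m, (A m).IsHermitian) :
    ∀ m, 1 ≤ m →
      (⨅ i, (hAherm 1).eigenvalues i) * m⁻¹ ≤ ⨅ i, (hAherm m).eigenvalues i := by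
  intro m hm
  rcases isEmpty_or_nonempty (Fin n) with hE | hNE
  · simp [Real.iInf_of_isEmpty]
  have hm0 : (0:ℝ) < m := lt_of_lt_of_le one_pos hm
  set c1 : ℝ := ⨅ i, (hAherm 1).eigenvalues i with hc1
  have hc1le : ∀ i, c1 ≤ (hAherm 1).eigenvalues i :=
    fun i => ciInf_le (Set.Finite.bddBelow (Set.finite_range _)) i
  have hs1 : ∀ j, (0:ℝ) < Real.sqrt (K 1 j j) :=
    fun j => Real.sqrt_pos.mpr (hdpos 1 le_rfl j)
  -- A 1 is positive definite
  have hA1pd : (A 1).PosDef := by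
    refine Matrix.PosDef.of_dotProduct_mulVec_pos (hAherm 1) fun x hx => ?_
    obtain ⟨hq1, -⟩ := scaled_quad (K 1) (A 1) (hdpos 1 le_rfl) (hAdef 1) x
    set z : Fin n → ℝ := fun j => (Real.sqrt (K 1 j j))⁻¹ * x j with hz
    have hzne : z ≠ 0 := by
      intro h0
      apply hx
      funext j
      have := congrFun h0 j
      simp only [hz, Pi.zero_apply] at this ⊢
      have hs := (hs1 j).ne'
      rcases mul_eq_zero.mp this with h | h
      · exact absurd h (inv_ne_zero hs)
      · exact h
    have := (hKpd 1 le_rfl).re_dotProduct_pos hzne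
    simpa [hq1] using this
  have hc1nonneg : 0 ≤ c1 :=
    le_ciInf fun i => (hA1pd.eigenvalues_pos i).le
  refine le_ciInf fun i => eigenvalue_lower_of_quad (hAherm m) (fun x => ?_) i
  -- main quadratic estimate
  set z : Fin n → ℝ := fun j => (Real.sqrt (K m j j))⁻¹ * x j with hz
  obtain ⟨hq1, hq2⟩ := scaled_quad (K m) (A m) (hdpos m hm) (hAdef m) x
  have hzj : ∀ j, (Real.sqrt (K m j j))⁻¹ * x j = z j := fun j => rfl
  simp only [hzj] at hq1 hq2
  set w : Fin n → ℝ := fun j => Real.sqrt (K 1 j j) * z j with hw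
  have hwz : (fun j => (Real.sqrt (K 1 j j))⁻¹ * w j) = z := by
    funext j
    simp only [hw]
    rw [← mul_assoc, inv_mul_cancel₀ (hs1 j).ne', one_mul]
  obtain ⟨hr1, hr2⟩ := scaled_quad (K 1) (A 1) (hdpos 1 le_rfl) (hAdef 1) w
  rw [hwz] at hr1
  simp only [fun j => congrFun hwz j] at hr2
  have hray := quad_lower_of_le_eigenvalues (hAherm 1) hc1le w
  calc c1 * m⁻¹ * (∑ j, x j ^ 2)
      = c1 * (m⁻¹ * ∑ j, K m j j * z j ^ 2) := by rw [hq2]; ring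
    _ ≤ c1 * (∑ j, K 1 j j * z j ^ 2) :=
        mul_le_mul_of_nonneg_left ((hdquad m hm z).2) hc1nonneg
    _ = c1 * (∑ j, w j ^ 2) := by rw [hr2]
    _ ≤ w ⬝ᵥ (A 1).mulVec w := hray
    _ = z ⬝ᵥ (K 1).mulVec z := hr1
    _ ≤ z ⬝ᵥ (K m).mulVec z := (hquad m hm z).1
    _ = x ⬝ᵥ (A m).mulVec x := hq1.symm
end

section
/- Let N be a real symmetric positive semidefinite n×n matrix with a simple zero eigenvalue whose (normalized) eigenvector is e, and let Δ(m) be symmetric matrices with Δ(m) = Δ^∞ + O(m⁻¹) in spectral norm. Define K(m) = m·N + Δ(m) and suppose K(m) is invertible for large m and η := eᵀΔ^∞ e > 0. Then K(m)^{-1} = e·η^{-1}·eᵀ + O(m⁻¹) in spectral norm as m → ∞. -/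
open Matrix
open scoped Matrix.Norms.L2Operator

private lemma vmv_mulVec {n : ℕ} (w v x : Fin n → ℝ) :
    (vecMulVec w v).mulVec x = (v ⬝ᵥ x) • w := by
  ext i
  simp only [Matrix.mulVec, dotProduct, vecMulVec_apply, Pi.smul_apply, smul_eq_mul,
    Finset.sum_mul]
  exact Finset.sum_congr rfl fun j _ => by ring

private lemma mul_vmv {n : ℕ} (A : Matrix (Fin n) (Fin n) ℝ) (w v : Fin n → ℝ) :
    A * vecMulVec w v = vecMulVec (A.mulVec w) v := by
  ext i j
  simp only [Matrix.mul_apply, vecMulVec_apply, Matrix.mulVec, dotProduct, Finset.sum_mul]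
  exact Finset.sum_congr rfl fun k _ => by ring

private lemma smul_vmv {n : ℕ} (c : ℝ) (w v : Fin n → ℝ) :
    vecMulVec (c • w) v = c • vecMulVec w v := by
  ext i j
  simp [vecMulVec_apply, mul_assoc]

private lemma vmv_zero {n : ℕ} (v : Fin n → ℝ) : vecMulVec (0 : Fin n → ℝ) v = 0 := by
  ext i j
  simp [vecMulVec_apply]

private lemma vmv_transpose {n : ℕ} (w v : Fin n → ℝ) :
    (vecMulVec w v)ᵀ = vecMulVec v w := by
  ext i j
  simp [vecMulVec_apply, mul_comm]

private lemma mat_norm_one_le (n : ℕ) : ‖(1 : Matrix (Fin n) (Fin n) ℝ)‖ ≤ 1 := by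
  rw [Matrix.cstar_norm_def, _root_.map_one, ContinuousLinearMap.one_def]
  exact ContinuousLinearMap.norm_id_le

theorem KHH_inverse_asymptotics {n : ℕ} (N Δinf : Matrix (Fin n) (Fin n) ℝ)
    (Δ : ℝ → Matrix (Fin n) (Fin n) ℝ)
    (hN : N.PosSemidef) (e : Fin n → ℝ) (he : e ⬝ᵥ e = 1)
    (hker : N.mulVec e = 0)
    (hsimple : ∀ x, N.mulVec x = 0 → ∃ c : ℝ, x = c • e)
    (hΔsym : ∀ m, (Δ m).IsHermitian)
    (hΔ : ∃ C M : ℝ, ∀ m ≥ M, ‖Δ m - Δinf‖ ≤ C / m)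
    (K : ℝ → Matrix (Fin n) (Fin n) ℝ) (hK : ∀ m, K m = m • N + Δ m)
    (hinv : ∃ M₀ : ℝ, ∀ m ≥ M₀, IsUnit (K m).det)
    (η : ℝ) (hη : η = e ⬝ᵥ Δinf.mulVec e) (hηpos : 0 < η) :
    ∃ C M : ℝ, ∀ m ≥ M, ‖(K m)⁻¹ - η⁻¹ • Matrix.vecMulVec e e‖ ≤ C / m := by
  have hηne : η ≠ 0 := ne_of_gt hηpos
  set P : Matrix (Fin n) (Fin n) ℝ := vecMulVec e e with hPdef
  have hPT : Pᵀ = P := by rw [hPdef]; exact vmv_transpose e e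
  have hNT : Nᵀ = N := by simpa using hN.1.eq
  -- basic algebraic identities
  have hNP : N * P = 0 := by rw [hPdef, mul_vmv, hker, vmv_zero]
  have hPΔP : P * (Δinf * P) = η • P := by
    rw [hPdef, mul_vmv Δinf e e, mul_vmv, vmv_mulVec, ← hη, smul_vmv]
  -- N + P is positive definite, hence invertible
  have hPherm : P.IsHermitian := IsHermitian.ext fun i j => by
    simp [hPdef, vecMulVec_apply, mul_comm]
  have hNPD : (N + P).PosDef := by
    refine posDef_iff_dotProduct_mulVec.mpr ⟨hN.1.add hPherm, fun x hx => ?_⟩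
    have hstar : star x = x := by
      funext i; exact star_trivial _
    have hPx : P.mulVec x = (e ⬝ᵥ x) • e := by rw [hPdef, vmv_mulVec]
    have hxe : x ⬝ᵥ P.mulVec x = (e ⬝ᵥ x) ^ 2 := by
      rw [hPx, dotProduct_smul, smul_eq_mul, dotProduct_comm]
      ring
    have h1 : 0 ≤ x ⬝ᵥ N.mulVec x := by simpa [hstar] using hN.dotProduct_mulVec_nonneg x
    rw [hstar, add_mulVec, dotProduct_add, hxe]
    rcases h1.lt_or_eq with h | h
    · nlinarith [sq_nonneg (e ⬝ᵥ x)]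
    · have hNx : N.mulVec x = 0 := by
        rw [← (hN.dotProduct_mulVec_zero_iff x)]
        rw [hstar]
        exact h.symm
      obtain ⟨c, rfl⟩ := hsimple x hNx
      have hc : c ≠ 0 := by
        rintro rfl
        exact hx (zero_smul _ _)
      have : e ⬝ᵥ c • e = c := by rw [dotProduct_smul, smul_eq_mul, he, mul_one]
      rw [hNx, dotProduct_zero, zero_add, this]
      positivity
  have hdetNP : IsUnit (N + P).det := hNPD.det_pos.ne'.isUnit
  set Mi : Matrix (Fin n) (Fin n) ℝ := (N + P)⁻¹ with hMdef
  have hMl : Mi * (N + P) = 1 := Matrix.nonsing_inv_mul _ hdetNP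
  have hMr : (N + P) * Mi = 1 := Matrix.mul_nonsing_inv _ hdetNP
  have hNPe : (N + P).mulVec e = e := by
    rw [add_mulVec, hker, hPdef, vmv_mulVec, he, one_smul, zero_add]
  have hMe : Mi.mulVec e = e := by
    conv_lhs => rw [← hNPe]
    rw [mulVec_mulVec, hMl, one_mulVec]
  have hMT : Miᵀ = Mi := by
    rw [hMdef, Matrix.transpose_nonsing_inv, transpose_add, hNT, hPT]
  have hMiP : Mi * P = P := by rw [hPdef, mul_vmv, hMe]
  have hPM : P * Mi = P := by
    calc P * Mi = (Miᵀ * Pᵀ)ᵀ := by rw [← transpose_mul, transpose_transpose]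
    _ = (Mi * P)ᵀ := by rw [hMT, hPT]
    _ = Pᵀ := by rw [hMiP]
    _ = P := hPT
  have hNM : N * Mi = 1 - P := by
    have : (N + P) * Mi = N * Mi + P * Mi := add_mul _ _ _
    rw [hMr, hPM] at this
    rw [eq_sub_iff_add_eq, this]
  set Y : Matrix (Fin n) (Fin n) ℝ := Mi * (1 - η⁻¹ • (Δinf * P)) with hYdef
  have hNY : N * Y = 1 - η⁻¹ • (Δinf * P) := by
    rw [hYdef, ← mul_assoc, hNM, sub_mul, one_mul, mul_sub, mul_one, mul_smul_comm, hPΔP,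
      smul_smul, inv_mul_cancel₀ hηne, one_smul]
    abel
  -- constants
  obtain ⟨C₀, M₀, hC₀⟩ := hΔ
  set C₁ : ℝ := max C₀ 0 with hC₁def
  have hC₁0 : 0 ≤ C₁ := le_max_right _ _
  set CΔ : ℝ := ‖Δinf‖ + C₁ with hCΔdef
  have hCΔ0 : 0 ≤ CΔ := add_nonneg (norm_nonneg _) hC₁0
  set C₂ : ℝ := η⁻¹ * C₁ * ‖P‖ + CΔ * ‖Y‖ with hC₂def
  have hC₂0 : 0 ≤ C₂ := by
    have := inv_nonneg.mpr hηpos.le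
    positivity
  refine ⟨2 * (η⁻¹ * ‖P‖ + ‖Y‖) * C₂ + ‖Y‖, max (max M₀ 1) (2 * C₂ + 1), fun m hm => ?_⟩
  have hmM₀ : M₀ ≤ m := le_trans (le_trans (le_max_left _ _) (le_max_left _ _)) hm
  have hm1 : (1 : ℝ) ≤ m := le_trans (le_trans (le_max_right _ _) (le_max_left _ _)) hm
  have hmC₂ : 2 * C₂ + 1 ≤ m := le_trans (le_max_right _ _) hm
  have hm0 : (0 : ℝ) < m := lt_of_lt_of_le one_pos hm1
  have hm0' : m ≠ 0 := ne_of_gt hm0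
  -- bounds on Δ m
  have hΔm : ‖Δ m - Δinf‖ ≤ C₁ / m := le_trans (hC₀ m hmM₀) (by gcongr; exact le_max_left _ _)
  have hΔmn : ‖Δ m‖ ≤ CΔ := by
    calc ‖Δ m‖ = ‖Δinf + (Δ m - Δinf)‖ := by congr 1; abel
    _ ≤ ‖Δinf‖ + ‖Δ m - Δinf‖ := norm_add_le _ _
    _ ≤ ‖Δinf‖ + C₁ / m := by linarith
    _ ≤ CΔ := by
        rw [hCΔdef]
        have : C₁ / m ≤ C₁ := div_le_self hC₁0 hm1
        linarith
  -- the approximate inverse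
  set X : Matrix (Fin n) (Fin n) ℝ := η⁻¹ • P + m⁻¹ • Y with hXdef
  set E : Matrix (Fin n) (Fin n) ℝ := η⁻¹ • ((Δ m - Δinf) * P) + m⁻¹ • (Δ m * Y) with hEdef
  have hKX : K m * X = 1 + E := by
    rw [hK m, hXdef, hEdef]
    simp only [add_mul, mul_add, smul_add, smul_mul_assoc, mul_smul_comm, smul_smul]
    rw [hNP, smul_zero, zero_add, inv_mul_cancel₀ hm0', one_smul, hNY, sub_mul, smul_sub]
    abel
  -- norm bound on E
  have hE : ‖E‖ ≤ C₂ / m := by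
    have h1 : ‖(Δ m - Δinf) * P‖ ≤ C₁ / m * ‖P‖ :=
      le_trans (norm_mul_le _ _) (mul_le_mul_of_nonneg_right hΔm (norm_nonneg _))
    have h2 : ‖Δ m * Y‖ ≤ CΔ * ‖Y‖ :=
      le_trans (norm_mul_le _ _) (mul_le_mul_of_nonneg_right hΔmn (norm_nonneg _))
    have hη' : (0:ℝ) ≤ η⁻¹ := inv_nonneg.mpr hηpos.le
    have hm' : (0:ℝ) ≤ m⁻¹ := inv_nonneg.mpr hm0.le
    calc ‖E‖ ≤ ‖η⁻¹ • ((Δ m - Δinf) * P)‖ + ‖m⁻¹ • (Δ m * Y)‖ := norm_add_le _ _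
    _ = η⁻¹ * ‖(Δ m - Δinf) * P‖ + m⁻¹ * ‖Δ m * Y‖ := by
        rw [norm_smul, norm_smul, Real.norm_eq_abs, Real.norm_eq_abs, abs_of_nonneg hη',
          abs_of_nonneg hm']
    _ ≤ η⁻¹ * (C₁ / m * ‖P‖) + m⁻¹ * (CΔ * ‖Y‖) := by
        exact add_le_add (mul_le_mul_of_nonneg_left h1 hη') (mul_le_mul_of_nonneg_left h2 hm')
    _ = C₂ / m := by rw [hC₂def]; ring
  have hEhalf : ‖E‖ ≤ 1 / 2 := by
    refine hE.trans ?_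
    rw [div_le_div_iff₀ hm0 two_pos]
    linarith
  have hElt : ‖E‖ < 1 := lt_of_le_of_lt hEhalf (by norm_num)
  -- 1 + E is invertible
  have hu : IsUnit (1 + E) := by
    have := (Units.oneSub (-E) (by simpa using hElt)).isUnit
    simpa [sub_neg_eq_add] using this
  have hudet : IsUnit (1 + E).det := (Matrix.isUnit_iff_isUnit_det _).mp hu
  have hKdet : IsUnit (K m).det := by
    have h : IsUnit ((K m).det * X.det) := by rw [← Matrix.det_mul, hKX]; exact hudet
    exact isUnit_of_mul_isUnit_left h
  have hKinv : (K m)⁻¹ = X * (1 + E)⁻¹ :=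
    Matrix.inv_eq_right_inv (by rw [← mul_assoc, hKX, Matrix.mul_nonsing_inv _ hudet])
  set G : Matrix (Fin n) (Fin n) ℝ := (1 + E)⁻¹ with hGdef
  have hG1 : G * (1 + E) = 1 := Matrix.nonsing_inv_mul _ hudet
  have hGid : G = 1 - G * E := by
    rw [mul_add, mul_one] at hG1
    exact eq_sub_of_add_eq hG1
  have hGn : ‖G‖ ≤ 2 := by
    have h1 : ‖G‖ ≤ 1 + ‖G‖ * (1 / 2) := by
      calc ‖G‖ = ‖1 - G * E‖ := by rw [← hGid]
      _ ≤ ‖(1 : Matrix (Fin n) (Fin n) ℝ)‖ + ‖G * E‖ := norm_sub_le _ _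
      _ ≤ 1 + ‖G‖ * (1 / 2) :=
          add_le_add (mat_norm_one_le n)
            (le_trans (norm_mul_le _ _) (mul_le_mul_of_nonneg_left hEhalf (norm_nonneg _)))
    linarith
  have hGm1 : ‖G - 1‖ ≤ 2 * (C₂ / m) := by
    have h2 : G - 1 = -(G * E) := by
      nth_rewrite 1 [hGid]
      abel
    rw [h2, norm_neg]
    calc ‖G * E‖ ≤ ‖G‖ * ‖E‖ := norm_mul_le _ _
    _ ≤ 2 * (C₂ / m) := mul_le_mul hGn hE (norm_nonneg _) (by norm_num)
  have hXn : ‖X‖ ≤ η⁻¹ * ‖P‖ + ‖Y‖ := by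
    have hη' : (0:ℝ) ≤ η⁻¹ := inv_nonneg.mpr hηpos.le
    calc ‖X‖ ≤ ‖η⁻¹ • P‖ + ‖m⁻¹ • Y‖ := norm_add_le _ _
    _ = η⁻¹ * ‖P‖ + m⁻¹ * ‖Y‖ := by
        rw [norm_smul, norm_smul, Real.norm_eq_abs, Real.norm_eq_abs, abs_of_nonneg hη',
          abs_of_nonneg (inv_nonneg.mpr hm0.le)]
    _ ≤ η⁻¹ * ‖P‖ + 1 * ‖Y‖ := by
        have : m⁻¹ ≤ 1 := by
          rw [inv_le_one_iff₀]; right; exact hm1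
        gcongr
    _ = η⁻¹ * ‖P‖ + ‖Y‖ := by ring
  have hdiff : (K m)⁻¹ - η⁻¹ • P = X * (G - 1) + m⁻¹ • Y := by
    rw [hKinv, mul_sub, mul_one, hXdef]
    abel
  calc ‖(K m)⁻¹ - η⁻¹ • P‖ = ‖X * (G - 1) + m⁻¹ • Y‖ := by rw [hdiff]
  _ ≤ ‖X * (G - 1)‖ + ‖m⁻¹ • Y‖ := norm_add_le _ _
  _ ≤ ‖X‖ * ‖G - 1‖ + m⁻¹ * ‖Y‖ := by
      rw [norm_smul, Real.norm_eq_abs, abs_of_nonneg (inv_nonneg.mpr hm0.le)]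
      exact add_le_add_left (norm_mul_le _ _) _
  _ ≤ (η⁻¹ * ‖P‖ + ‖Y‖) * (2 * (C₂ / m)) + m⁻¹ * ‖Y‖ := by
      have h0 : (0:ℝ) ≤ ‖G - 1‖ := norm_nonneg _
      have h1 : (0:ℝ) ≤ ‖X‖ := norm_nonneg _
      exact add_le_add_left (mul_le_mul hXn hGm1 h0 (by positivity)) _
  _ = (2 * (η⁻¹ * ‖P‖ + ‖Y‖) * C₂ + ‖Y‖) / m := by ring
end

section
/- With K(m) = m·N + Δ(m) as above (N SPSD with simple zero eigenvalue and unit eigenvector e, Δ(m) = Δ^∞ + O(m⁻¹), η = eᵀΔ^∞e > 0), and matrices B(m) = B^∞ + O(m⁻¹), C(m) = C^∞ + O(m⁻¹): the product C(m)·K(m)^{-1} satisfies C(m) K(m)^{-1} = (C^∞ e)·η^{-1}·eᵀ + O(m⁻¹) in spectral norm as m → ∞. -/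
open Matrix
open scoped Matrix.Norms.L2Operator RealInnerProductSpace

noncomputable def toE {n : ℕ} (v : Fin n → ℝ) : EuclideanSpace ℝ (Fin n) :=
  (WithLp.equiv 2 _).symm v

variable {n p : ℕ}

lemma inner_toE (v w : Fin n → ℝ) : ⟪toE v, toE w⟫ = v ⬝ᵥ w := by
  simp [toE, PiLp.inner_apply, dotProduct, mul_comm]

lemma norm_toE_sq (v : Fin n → ℝ) : ‖toE v‖ ^ 2 = v ⬝ᵥ v := by
  rw [← inner_toE, real_inner_self_eq_norm_sq]

lemma toE_add (v w : Fin n → ℝ) : toE (v + w) = toE v + toE w := rfl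
lemma toE_sub (v w : Fin n → ℝ) : toE (v - w) = toE v - toE w := rfl
lemma toE_smul (a : ℝ) (v : Fin n → ℝ) : toE (a • v) = a • toE v := rfl
lemma toE_zero : toE (0 : Fin n → ℝ) = 0 := rfl

lemma dot_abs_le (v w : Fin n → ℝ) : |v ⬝ᵥ w| ≤ ‖toE v‖ * ‖toE w‖ := by
  rw [← inner_toE]; exact abs_real_inner_le_norm _ _

lemma vecMulVec_mulVec' (a : Fin p → ℝ) (b v : Fin n → ℝ) :
    vecMulVec a b *ᵥ v = (b ⬝ᵥ v) • a := by
  ext i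
  simp [mulVec, dotProduct, vecMulVec_apply, Finset.mul_sum, mul_comm, mul_left_comm]

lemma coercive (N : Matrix (Fin n) (Fin n) ℝ) (hN : N.PosSemidef) (e : Fin n → ℝ)
    (he : e ⬝ᵥ e = 1) (hker : N *ᵥ e = 0)
    (hsimple : ∀ x, N *ᵥ x = 0 → ∃ c : ℝ, x = c • e) :
    ∃ lam > (0:ℝ), ∀ v : Fin n → ℝ, e ⬝ᵥ v = 0 → lam * ‖toE v‖ ^ 2 ≤ v ⬝ᵥ (N *ᵥ v) := by
  classical
  set M : Matrix (Fin n) (Fin n) ℝ := N + vecMulVec e e with hMdef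
  have hMq : ∀ v : Fin n → ℝ, v ⬝ᵥ (M *ᵥ v) = v ⬝ᵥ (N *ᵥ v) + (e ⬝ᵥ v) ^ 2 := by
    intro v
    rw [hMdef, Matrix.add_mulVec, dotProduct_add, vecMulVec_mulVec']
    rw [dotProduct_smul]
    rw [dotProduct_comm v e, smul_eq_mul]; ring
  have hMpos : ∀ v : Fin n → ℝ, v ≠ 0 → 0 < v ⬝ᵥ (M *ᵥ v) := by
    intro v hv
    rw [hMq]
    have h1 : 0 ≤ v ⬝ᵥ (N *ᵥ v) := by simpa using hN.dotProduct_mulVec_nonneg v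
    rcases h1.lt_or_eq with h | h
    · nlinarith [sq_nonneg (e ⬝ᵥ v)]
    · have hz : N *ᵥ v = 0 := by
        rw [← hN.dotProduct_mulVec_zero_iff v]; simpa using h.symm
      obtain ⟨c, rfl⟩ := hsimple v hz
      have hc : c ≠ 0 := by rintro rfl; simp at hv
      have : e ⬝ᵥ c • e = c := by rw [dotProduct_smul, he]; simp
      rw [this, ← h]
      positivity
  -- continuity of quadratic form on EuclideanSpace
  set f : EuclideanSpace ℝ (Fin n) → ℝ :=
    fun y => (WithLp.equiv 2 _ y) ⬝ᵥ (M *ᵥ (WithLp.equiv 2 _ y)) with hf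
  have hgcont : Continuous fun v : Fin n → ℝ => v ⬝ᵥ (M *ᵥ v) := by
    have : (fun v : Fin n → ℝ => v ⬝ᵥ (M *ᵥ v)) =
        fun v => ∑ i, v i * ∑ j, M i j * v j := by
      funext v; simp [dotProduct, mulVec]
    rw [this]
    exact continuous_finset_sum _ fun i _ =>
      (continuous_apply i).mul (continuous_finset_sum _ fun j _ =>
        continuous_const.mul (continuous_apply j))
  have hfcont : Continuous f := hgcont.comp (PiLp.continuous_ofLp 2 _)
  have hesphere : toE e ∈ Metric.sphere (0 : EuclideanSpace ℝ (Fin n)) 1 := by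
    rw [mem_sphere_zero_iff_norm]
    nlinarith [norm_nonneg (toE e), norm_toE_sq e, he]
  obtain ⟨y₀, hy₀S, hy₀min⟩ := (isCompact_sphere (0 : EuclideanSpace ℝ (Fin n)) 1).exists_isMinOn
    ⟨toE e, hesphere⟩ hfcont.continuousOn
  refine ⟨f y₀, ?_, ?_⟩
  · have : (WithLp.equiv 2 _ y₀) ≠ 0 := by
      intro h
      have : y₀ = 0 := by
        apply (WithLp.equiv 2 _).injective; simpa using h
      rw [mem_sphere_zero_iff_norm, this] at hy₀S; simp at hy₀S
    exact hMpos _ this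
  · intro v hv
    rcases eq_or_ne v 0 with rfl | hvne
    · simp [toE_zero]
    have hnv : 0 < ‖toE v‖ := by
      rw [norm_pos_iff]
      intro h
      exact hvne ((WithLp.equiv 2 _).symm.injective (h.trans rfl))
    set s : ℝ := ‖toE v‖⁻¹ with hs
    have hmem : s • toE v ∈ Metric.sphere (0 : EuclideanSpace ℝ (Fin n)) 1 := by
      rw [mem_sphere_zero_iff_norm, norm_smul, hs, Real.norm_eq_abs, abs_inv, abs_of_pos hnv]
      field_simp
    have hle : f y₀ ≤ f (s • toE v) := hy₀min hmem
    have hval : f (s • toE v) = s ^ 2 * (v ⬝ᵥ (M *ᵥ v)) := by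
      have hsv : (WithLp.equiv 2 _) (s • toE v) = s • v := rfl
      rw [hf]
      simp only [hsv]
      rw [smul_dotProduct, Matrix.mulVec_smul, dotProduct_smul]
      ring_nf
    rw [hval] at hle
    have key : f y₀ * ‖toE v‖ ^ 2 ≤ v ⬝ᵥ (M *ᵥ v) := by
      have h2 : s ^ 2 * ‖toE v‖ ^ 2 = 1 := by
        rw [hs]; field_simp
      have h3 := mul_le_mul_of_nonneg_right hle (sq_nonneg ‖toE v‖)
      calc f y₀ * ‖toE v‖ ^ 2 ≤ s ^ 2 * (v ⬝ᵥ (M *ᵥ v)) * ‖toE v‖ ^ 2 := h3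
        _ = (s ^ 2 * ‖toE v‖ ^ 2) * (v ⬝ᵥ (M *ᵥ v)) := by ring
        _ = v ⬝ᵥ (M *ᵥ v) := by rw [h2, one_mul]
    calc f y₀ * ‖toE v‖ ^ 2 ≤ v ⬝ᵥ (M *ᵥ v) := key
      _ = v ⬝ᵥ (N *ᵥ v) + (e ⬝ᵥ v) ^ 2 := hMq v
      _ = v ⬝ᵥ (N *ᵥ v) := by rw [hv]; ring

lemma toE_mulVec_le (A : Matrix (Fin p) (Fin n) ℝ) (v : Fin n → ℝ) :
    ‖toE (A *ᵥ v)‖ ≤ ‖A‖ * ‖toE v‖ :=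
  A.l2_opNorm_mulVec (toE v)

lemma opNorm_le_of_forall (A : Matrix (Fin p) (Fin n) ℝ) {c : ℝ} (hc : 0 ≤ c)
    (h : ∀ v : Fin n → ℝ, ‖toE (A *ᵥ v)‖ ≤ c * ‖toE v‖) : ‖A‖ ≤ c := by
  rw [Matrix.l2_opNorm_def]
  refine ContinuousLinearMap.opNorm_le_bound _ hc fun x => ?_
  have := h ((WithLp.equiv 2 _) x)
  simpa [toE, Matrix.toEuclideanLin_apply] using this

lemma cancel_sq {a b c : ℝ} (hb : 0 ≤ b) (hc : 0 ≤ c) (h : a * b ^ 2 ≤ b * c) :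
    a * b ≤ c := by
  rcases hb.lt_or_eq with hb' | hb'
  · nlinarith
  · rw [← hb']; simpa using hc

lemma div_le_max {c m : ℝ} (hm : 1 ≤ m) : c / m ≤ max c 0 := by
  rcases le_total c 0 with h | h
  · exact le_trans (div_nonpos_of_nonpos_of_nonneg h (by linarith)) (le_max_right _ _)
  · exact le_trans (div_le_self h hm) (le_max_left _ _)

set_option maxHeartbeats 1000000 in
theorem coupling_inverse_asymptotics {n p q : ℕ}
    (N Δinf : Matrix (Fin n) (Fin n) ℝ) (Δ : ℝ → Matrix (Fin n) (Fin n) ℝ)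
    (hN : N.PosSemidef) (e : Fin n → ℝ) (he : e ⬝ᵥ e = 1)
    (hker : N.mulVec e = 0)
    (hsimple : ∀ x, N.mulVec x = 0 → ∃ c : ℝ, x = c • e)
    (hΔsym : ∀ m, (Δ m).IsHermitian)
    (hΔ : ∃ C M : ℝ, ∀ m ≥ M, ‖Δ m - Δinf‖ ≤ C / m)
    (K : ℝ → Matrix (Fin n) (Fin n) ℝ) (hK : ∀ m, K m = m • N + Δ m)
    (hinv : ∃ M₀ : ℝ, ∀ m ≥ M₀, IsUnit (K m).det)
    (η : ℝ) (hη : η = e ⬝ᵥ Δinf.mulVec e) (hηpos : 0 < η)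
    (B : ℝ → Matrix (Fin n) (Fin q) ℝ) (Binf : Matrix (Fin n) (Fin q) ℝ)
    (hB : ∃ C M : ℝ, ∀ m ≥ M, ‖B m - Binf‖ ≤ C / m)
    (Cm : ℝ → Matrix (Fin p) (Fin n) ℝ) (Cinf : Matrix (Fin p) (Fin n) ℝ)
    (hC : ∃ C M : ℝ, ∀ m ≥ M, ‖Cm m - Cinf‖ ≤ C / m) :
    ∃ C M : ℝ, ∀ m ≥ M,
      ‖Cm m * (K m)⁻¹ - η⁻¹ • Matrix.vecMulVec (Cinf.mulVec e) e‖ ≤ C / m := by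
  obtain ⟨Cδ, Mδ, hΔb⟩ := hΔ
  obtain ⟨M₀, hM₀⟩ := hinv
  obtain ⟨Cc, Mc, hCb⟩ := hC
  obtain ⟨lam, hlam, hcoer⟩ := coercive N hN e he hker hsimple
  have hene : ‖toE e‖ = 1 := by nlinarith [norm_nonneg (toE e), norm_toE_sq e, he]
  have hCδ0 : 0 ≤ Cδ := by
    have h := hΔb (max Mδ 1) (le_max_left _ _)
    have h1 : (0:ℝ) ≤ Cδ / max Mδ 1 := le_trans (norm_nonneg _) h
    have h2 : (0:ℝ) < max Mδ 1 := lt_of_lt_of_le one_pos (le_max_right _ _)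
    have h3 : Cδ = Cδ / max Mδ 1 * max Mδ 1 := by field_simp
    rw [h3]; exact mul_nonneg h1 h2.le
  have hCc0 : 0 ≤ Cc := by
    have h := hCb (max Mc 1) (le_max_left _ _)
    have h1 : (0:ℝ) ≤ Cc / max Mc 1 := le_trans (norm_nonneg _) h
    have h2 : (0:ℝ) < max Mc 1 := lt_of_lt_of_le one_pos (le_max_right _ _)
    have h3 : Cc = Cc / max Mc 1 * max Mc 1 := by field_simp
    rw [h3]; exact mul_nonneg h1 h2.le
  set D : ℝ := ‖Δinf‖ + Cδ with hD
  have hD0 : 0 ≤ D := add_nonneg (norm_nonneg _) hCδ0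
  set c₁ : ℝ := (4 + 2*η)/η with hc₁
  have hc₁0 : 0 < c₁ := by rw [hc₁]; positivity
  set c₂ : ℝ := (2*D + η)*(1 + D*c₁)/(η*lam) with hc₂
  have hc₂0 : 0 ≤ c₂ := by
    rw [hc₂]
    apply div_nonneg _ (by positivity)
    have : 0 ≤ 1 + D * c₁ := by positivity
    positivity
  set M₁ : ℝ := max (max (max M₀ Mδ) (max 1 (2*Cδ/η)))
      (max ((4*D+2*η)*D/(η*lam)) ((2*D+η)/(η*lam))) with hM₁
  have key : ∀ m : ℝ, M₁ ≤ m →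
      (∀ x, ‖toE ((K m)⁻¹ *ᵥ x)‖ ≤ c₁ * ‖toE x‖) ∧
      (∀ x, e ⬝ᵥ x = 0 → m * ‖toE ((K m)⁻¹ *ᵥ x)‖ ≤ c₂ * ‖toE x‖) := by
    intro m hm
    have hmM₀ : M₀ ≤ m := le_trans (by rw [hM₁]; simp [le_max_iff]) hm
    have hmMδ : Mδ ≤ m := le_trans (by rw [hM₁]; simp [le_max_iff]) hm
    have hm1 : (1:ℝ) ≤ m := le_trans (by rw [hM₁]; simp [le_max_iff]) hm
    have hmη : 2*Cδ/η ≤ m := le_trans (by rw [hM₁]; simp [le_max_iff]) hm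
    have hmA : (4*D+2*η)*D/(η*lam) ≤ m := le_trans (by rw [hM₁]; simp [le_max_iff]) hm
    have hmB : (2*D+η)/(η*lam) ≤ m := le_trans (by rw [hM₁]; simp [le_max_iff]) hm
    have hm0 : (0:ℝ) < m := lt_of_lt_of_le one_pos hm1
    have hdet := hM₀ m hmM₀
    have hKK : ∀ y, K m *ᵥ ((K m)⁻¹ *ᵥ y) = y := fun y => by
      rw [Matrix.mulVec_mulVec, Matrix.mul_nonsing_inv _ hdet, Matrix.one_mulVec]
    have hΔm : ‖Δ m‖ ≤ D := by
      have h := hΔb m hmMδ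
      have h2 : Cδ/m ≤ Cδ := div_le_self hCδ0 hm1
      have h3 := norm_sub_norm_le (Δ m) Δinf
      rw [hD]; linarith
    have hη2 : η/2 ≤ e ⬝ᵥ (Δ m *ᵥ e) := by
      have hsplit : e ⬝ᵥ (Δ m *ᵥ e) = η + e ⬝ᵥ ((Δ m - Δinf) *ᵥ e) := by
        rw [hη, Matrix.sub_mulVec, dotProduct_sub]; ring
      have habs : |e ⬝ᵥ ((Δ m - Δinf) *ᵥ e)| ≤ Cδ/m := by
        have h1 := dot_abs_le e ((Δ m - Δinf) *ᵥ e)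
        rw [hene, one_mul] at h1
        refine le_trans h1 (le_trans (le_trans (toE_mulVec_le _ _) ?_) (hΔb m hmMδ))
        rw [hene, mul_one]
      have hCδm : Cδ/m ≤ η/2 := by
        rw [div_le_iff₀ hm0]
        have := (div_le_iff₀ hηpos).mp hmη
        linarith
      have := neg_abs_le (e ⬝ᵥ ((Δ m - Δinf) *ᵥ e))
      linarith
    have aux : ∀ x : Fin n → ℝ,
        η * ‖toE ((K m)⁻¹ *ᵥ x)‖ ≤ 2*|e ⬝ᵥ x| +
          (2*D+η) * ‖toE ((K m)⁻¹ *ᵥ x - (e ⬝ᵥ ((K m)⁻¹ *ᵥ x)) • e)‖ ∧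
        m*lam*‖toE ((K m)⁻¹ *ᵥ x - (e ⬝ᵥ ((K m)⁻¹ *ᵥ x)) • e)‖ ≤
          ‖toE x‖ + D*‖toE ((K m)⁻¹ *ᵥ x)‖ := by
      intro x
      set u : Fin n → ℝ := (K m)⁻¹ *ᵥ x with hu
      set α : ℝ := e ⬝ᵥ u with hα
      set w : Fin n → ℝ := u - α • e with hw
      clear_value u α w
      have huw : u = α • e + w := by rw [hw]; abel
      have hew : e ⬝ᵥ w = 0 := by
        rw [hw, dotProduct_sub, dotProduct_smul, he, smul_eq_mul, mul_one, hα, sub_self]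
      have hNuw : N *ᵥ u = N *ᵥ w := by
        conv_lhs => rw [huw]
        rw [Matrix.mulVec_add, Matrix.mulVec_smul, hker]; simp
      have hx : x = m • (N *ᵥ w) + Δ m *ᵥ u := by
        conv_lhs => rw [← hKK x, ← hu, hK m]
        rw [Matrix.add_mulVec, Matrix.smul_mulVec, hNuw]
      have hNT : Nᵀ = N := by
        ext i j
        have := congrFun (congrFun hN.1 i) j
        simpa [Matrix.conjTranspose_apply] using this
      have heNw : e ⬝ᵥ (N *ᵥ w) = 0 := by
        rw [dotProduct_mulVec, ← Matrix.mulVec_transpose, hNT, hker, zero_dotProduct]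
      have hex : e ⬝ᵥ x = e ⬝ᵥ (Δ m *ᵥ u) := by
        rw [hx, dotProduct_add, dotProduct_smul, heNw, smul_zero, zero_add]
      have hwx : w ⬝ᵥ x = m * (w ⬝ᵥ (N *ᵥ w)) + w ⬝ᵥ (Δ m *ᵥ u) := by
        rw [hx, dotProduct_add, dotProduct_smul, smul_eq_mul]
      have hΔuB : ‖toE (Δ m *ᵥ u)‖ ≤ D * ‖toE u‖ :=
        le_trans (toE_mulVec_le _ _) (mul_le_mul_of_nonneg_right hΔm (norm_nonneg _))
      have hwΔu : |w ⬝ᵥ (Δ m *ᵥ u)| ≤ ‖toE w‖ * (D * ‖toE u‖) :=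
        le_trans (dot_abs_le _ _) (mul_le_mul_of_nonneg_left hΔuB (norm_nonneg _))
      have hcoerw := hcoer w hew
      have ha2 : m*lam*‖toE w‖ ≤ ‖toE x‖ + D*‖toE u‖ := by
        apply cancel_sq (norm_nonneg (toE w))
          (add_nonneg (norm_nonneg _) (mul_nonneg hD0 (norm_nonneg _)))
        have hstep : m * (lam * ‖toE w‖^2) ≤ m * (w ⬝ᵥ (N *ᵥ w)) :=
          mul_le_mul_of_nonneg_left hcoerw hm0.le
        have hwxa : |w ⬝ᵥ x| ≤ ‖toE w‖ * ‖toE x‖ := dot_abs_le _ _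
        linarith [neg_abs_le (w ⬝ᵥ (Δ m *ᵥ u)), le_abs_self (w ⬝ᵥ x), hstep, hwx, hwΔu, hwxa]
      have hαb : (η/2) * |α| ≤ |e ⬝ᵥ x| + D * ‖toE w‖ := by
        have hsplitΔ : e ⬝ᵥ (Δ m *ᵥ u) = α * (e ⬝ᵥ (Δ m *ᵥ e)) + e ⬝ᵥ (Δ m *ᵥ w) := by
          conv_lhs => rw [huw]
          rw [Matrix.mulVec_add, Matrix.mulVec_smul, dotProduct_add, dotProduct_smul,
            smul_eq_mul]
        have heΔw : |e ⬝ᵥ (Δ m *ᵥ w)| ≤ D * ‖toE w‖ := by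
          have h1 := dot_abs_le e (Δ m *ᵥ w)
          rw [hene, one_mul] at h1
          exact le_trans h1
            (le_trans (toE_mulVec_le _ _) (mul_le_mul_of_nonneg_right hΔm (norm_nonneg _)))
        have h5 : |α| * (η/2) ≤ |α| * (e ⬝ᵥ (Δ m *ᵥ e)) :=
          mul_le_mul_of_nonneg_left hη2 (abs_nonneg α)
        have h6 : |α| * (e ⬝ᵥ (Δ m *ᵥ e)) = |α * (e ⬝ᵥ (Δ m *ᵥ e))| := by
          rw [abs_mul, abs_of_pos (lt_of_lt_of_le (by positivity) hη2)]
        have h7 : α * (e ⬝ᵥ (Δ m *ᵥ e)) = e ⬝ᵥ x - e ⬝ᵥ (Δ m *ᵥ w) := by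
          rw [hex, hsplitΔ]; ring
        have h8 : |e ⬝ᵥ x - e ⬝ᵥ (Δ m *ᵥ w)| ≤ |e ⬝ᵥ x| + |e ⬝ᵥ (Δ m *ᵥ w)| :=
          abs_sub _ _
        rw [h7] at h6
        calc (η/2) * |α| = |α| * (η/2) := by ring
          _ ≤ |α| * (e ⬝ᵥ (Δ m *ᵥ e)) := h5
          _ = |e ⬝ᵥ x - e ⬝ᵥ (Δ m *ᵥ w)| := h6
          _ ≤ |e ⬝ᵥ x| + |e ⬝ᵥ (Δ m *ᵥ w)| := h8
          _ ≤ |e ⬝ᵥ x| + D * ‖toE w‖ := by linarith [heΔw]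
      have hUle : ‖toE u‖ ≤ |α| + ‖toE w‖ := by
        conv_lhs => rw [huw]
        calc ‖toE (α • e + w)‖ ≤ ‖toE (α • e)‖ + ‖toE w‖ := by
              rw [toE_add]; exact norm_add_le _ _
          _ = |α| + ‖toE w‖ := by
              rw [toE_smul, norm_smul, hene, Real.norm_eq_abs, mul_one]
      constructor
      · have h9 := mul_le_mul_of_nonneg_left hUle hηpos.le
        nlinarith [hαb, h9, norm_nonneg (toE w), abs_nonneg (e ⬝ᵥ x)]
      · exact ha2
    have mlpos : (0:ℝ) < m * lam := mul_pos hm0 hlam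
    have part1 : ∀ x, ‖toE ((K m)⁻¹ *ᵥ x)‖ ≤ c₁ * ‖toE x‖ := by
      intro x
      obtain ⟨a1, a2⟩ := aux x
      have hexX : |e ⬝ᵥ x| ≤ ‖toE x‖ := by
        have := dot_abs_le e x; rwa [hene, one_mul] at this
      set U := ‖toE ((K m)⁻¹ *ᵥ x)‖
      set W := ‖toE ((K m)⁻¹ *ᵥ x - (e ⬝ᵥ ((K m)⁻¹ *ᵥ x)) • e)‖
      set X := ‖toE x‖
      have hU0 : 0 ≤ U := norm_nonneg _
      have hX0 : 0 ≤ X := norm_nonneg _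
      clear_value U W X
      have a1' : η*U ≤ 2*X + (2*D+η)*W := by linarith
      have p1 : (η*U)*(m*lam) ≤ (2*X + (2*D+η)*W)*(m*lam) :=
        mul_le_mul_of_nonneg_right a1' mlpos.le
      have p2 : (2*D+η)*(m*lam*W) ≤ (2*D+η)*(X + D*U) :=
        mul_le_mul_of_nonneg_left a2 (by positivity)
      have hmA' : (4*D+2*η)*D ≤ m*(η*lam) := by
        rw [div_le_iff₀ (mul_pos hηpos hlam)] at hmA; linarith
      have hmB' : (2*D+η) ≤ m*(η*lam) := by
        rw [div_le_iff₀ (mul_pos hηpos hlam)] at hmB; linarith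
      have p3 : ((4*D+2*η)*D)*U ≤ (m*(η*lam))*U :=
        mul_le_mul_of_nonneg_right hmA' hU0
      have p4 : (2*D+η)*X ≤ (m*(η*lam))*X :=
        mul_le_mul_of_nonneg_right hmB' hX0
      have goal0 : (η*U)*(m*lam) ≤ ((4+2*η)*X)*(m*lam) := by linarith [p1, p2, p3, p4]
      have hg : η*U ≤ (4+2*η)*X := le_of_mul_le_mul_right goal0 mlpos
      rw [hc₁, div_mul_eq_mul_div, le_div_iff₀ hηpos]
      linarith
    refine ⟨part1, ?_⟩
    intro x hx0
    obtain ⟨a1, a2⟩ := aux x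
    rw [hx0, abs_zero] at a1
    have hu1 := part1 x
    set U := ‖toE ((K m)⁻¹ *ᵥ x)‖
    set W := ‖toE ((K m)⁻¹ *ᵥ x - (e ⬝ᵥ ((K m)⁻¹ *ᵥ x)) • e)‖
    set X := ‖toE x‖
    have hU0 : 0 ≤ U := norm_nonneg _
    have hX0 : 0 ≤ X := norm_nonneg _
    clear_value U W X
    have r1 : (η*U)*(m*lam) ≤ ((2*D+η)*W)*(m*lam) :=
      mul_le_mul_of_nonneg_right (by linarith) mlpos.le
    have r2 : (2*D+η)*(m*lam*W) ≤ (2*D+η)*(X + D*U) :=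
      mul_le_mul_of_nonneg_left a2 (by positivity)
    have r3 : ((2*D+η)*D)*U ≤ ((2*D+η)*D)*(c₁*X) :=
      mul_le_mul_of_nonneg_left hu1 (by positivity)
    have goal0 : (m*U)*(η*lam) ≤ ((2*D+η)*(1+D*c₁))*X := by linarith [r1, r2, r3]
    rw [hc₂, div_mul_eq_mul_div, le_div_iff₀ (by positivity)]
    linarith
  
  refine ⟨Cc*c₁ + ‖Cinf‖*(c₂*(1 + η⁻¹*‖Δinf‖) + c₁*η⁻¹*Cδ), max M₁ Mc, fun m hm => ?_⟩
  have hmM₁ : M₁ ≤ m := le_trans (le_max_left _ _) hm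
  have hmMc : Mc ≤ m := le_trans (le_max_right _ _) hm
  obtain ⟨part1, part2⟩ := key m hmM₁
  have hm1 : (1:ℝ) ≤ m := le_trans (by rw [hM₁]; simp [le_max_iff]) hmM₁
  have hmMδ : Mδ ≤ m := le_trans (by rw [hM₁]; simp [le_max_iff]) hmM₁
  have hm0 : (0:ℝ) < m := lt_of_lt_of_le one_pos hm1
  have hdet := hM₀ m (le_trans (by rw [hM₁]; simp [le_max_iff]) hmM₁)
  have hKe : (K m)⁻¹ *ᵥ (Δ m *ᵥ e) = e := by
    have h1 : K m *ᵥ e = Δ m *ᵥ e := by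
      rw [hK m, Matrix.add_mulVec, Matrix.smul_mulVec, hker, smul_zero, zero_add]
    rw [← h1, Matrix.mulVec_mulVec, Matrix.nonsing_inv_mul _ hdet, Matrix.one_mulVec]
  have hCfin0 : 0 ≤ Cc*c₁ + ‖Cinf‖*(c₂*(1 + η⁻¹*‖Δinf‖) + c₁*η⁻¹*Cδ) := by
    have h1 : (0:ℝ) ≤ 1 + η⁻¹*‖Δinf‖ := by positivity
    have h2 : 0 ≤ c₂*(1 + η⁻¹*‖Δinf‖) + c₁*η⁻¹*Cδ :=
      add_nonneg (mul_nonneg hc₂0 h1)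
        (mul_nonneg (mul_nonneg hc₁0.le (by positivity)) hCδ0)
    exact add_nonneg (mul_nonneg hCc0 hc₁0.le) (mul_nonneg (norm_nonneg _) h2)
  apply opNorm_le_of_forall _ (div_nonneg hCfin0 hm0.le)
  intro x
  set u : Fin n → ℝ := (K m)⁻¹ *ᵥ x with hu
  set s : ℝ := η⁻¹ * (e ⬝ᵥ x) with hs
  set X := ‖toE x‖ with hX
  have hX0 : 0 ≤ X := norm_nonneg _
  have hTx : (Cm m * (K m)⁻¹ - η⁻¹ • vecMulVec (Cinf *ᵥ e) e) *ᵥ x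
      = (Cm m - Cinf) *ᵥ u + Cinf *ᵥ (u - s • e) := by
    rw [Matrix.sub_mulVec, Matrix.smul_mulVec, vecMulVec_mulVec',
      ← Matrix.mulVec_mulVec, ← hu, Matrix.sub_mulVec, Matrix.mulVec_sub,
      Matrix.mulVec_smul, smul_smul, ← hs]
    abel
  have hρ : u - s • e =
      (K m)⁻¹ *ᵥ ((x - s • (Δinf *ᵥ e)) + (s • (Δinf *ᵥ e) - s • (Δ m *ᵥ e))) := by
    have h2 : (x - s • (Δinf *ᵥ e)) + (s • (Δinf *ᵥ e) - s • (Δ m *ᵥ e))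
        = x - s • (Δ m *ᵥ e) := by abel
    rw [h2, Matrix.mulVec_sub, Matrix.mulVec_smul, hKe, ← hu]
  have heρ₁ : e ⬝ᵥ (x - s • (Δinf *ᵥ e)) = 0 := by
    rw [dotProduct_sub, dotProduct_smul, smul_eq_mul, ← hη, hs]
    field_simp
    ring
  have hsabs : |s| ≤ η⁻¹ * X := by
    rw [hs, abs_mul, abs_of_pos (inv_pos.mpr hηpos)]
    have h1 := dot_abs_le e x
    rw [hene, one_mul] at h1
    exact mul_le_mul_of_nonneg_left h1 (inv_pos.mpr hηpos).le
  have hρ₁n : ‖toE (x - s • (Δinf *ᵥ e))‖ ≤ (1 + η⁻¹*‖Δinf‖) * X := by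
    rw [toE_sub]
    refine le_trans (norm_sub_le _ _) ?_
    rw [toE_smul, norm_smul, Real.norm_eq_abs]
    have h3 : ‖toE (Δinf *ᵥ e)‖ ≤ ‖Δinf‖ := by
      have h := toE_mulVec_le Δinf e; rwa [hene, mul_one] at h
    have h4 : |s| * ‖toE (Δinf *ᵥ e)‖ ≤ (η⁻¹ * X) * ‖Δinf‖ :=
      mul_le_mul hsabs h3 (norm_nonneg _) (by positivity)
    nlinarith [h4]
  have hρ₂n : m * ‖toE (s • (Δinf *ᵥ e) - s • (Δ m *ᵥ e))‖ ≤ η⁻¹*Cδ*X := by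
    have h5 : s • (Δinf *ᵥ e) - s • (Δ m *ᵥ e) = (-s) • ((Δ m - Δinf) *ᵥ e) := by
      rw [Matrix.sub_mulVec, neg_smul, smul_sub]; abel
    rw [h5, toE_smul, norm_smul, Real.norm_eq_abs, abs_neg]
    have h6 : ‖toE ((Δ m - Δinf) *ᵥ e)‖ ≤ Cδ/m := by
      have h := toE_mulVec_le (Δ m - Δinf) e
      rw [hene, mul_one] at h
      exact le_trans h (hΔb m hmMδ)
    have h7 : |s| * ‖toE ((Δ m - Δinf) *ᵥ e)‖ ≤ (η⁻¹*X) * (Cδ/m) :=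
      mul_le_mul hsabs h6 (norm_nonneg _) (by positivity)
    have h8 : m * ((η⁻¹*X)*(Cδ/m)) = η⁻¹*Cδ*X := by field_simp
    calc m * (|s| * ‖toE ((Δ m - Δinf) *ᵥ e)‖) ≤ m * ((η⁻¹*X)*(Cδ/m)) :=
          mul_le_mul_of_nonneg_left h7 hm0.le
      _ = η⁻¹*Cδ*X := h8
  have hmid : m * ‖toE (u - s • e)‖ ≤ (c₂*(1 + η⁻¹*‖Δinf‖) + c₁*η⁻¹*Cδ) * X := by
    rw [hρ, Matrix.mulVec_add, toE_add]
    refine le_trans (mul_le_mul_of_nonneg_left (norm_add_le _ _) hm0.le) ?_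
    have b1 : m * ‖toE ((K m)⁻¹ *ᵥ (x - s • (Δinf *ᵥ e)))‖ ≤ c₂ * ((1 + η⁻¹*‖Δinf‖) * X) :=
      le_trans (part2 _ heρ₁) (mul_le_mul_of_nonneg_left hρ₁n hc₂0)
    have b2 : m * ‖toE ((K m)⁻¹ *ᵥ (s • (Δinf *ᵥ e) - s • (Δ m *ᵥ e)))‖
        ≤ c₁ * (η⁻¹*Cδ*X) := by
      have h9 := part1 (s • (Δinf *ᵥ e) - s • (Δ m *ᵥ e))
      calc m * ‖toE ((K m)⁻¹ *ᵥ (s • (Δinf *ᵥ e) - s • (Δ m *ᵥ e)))‖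
          ≤ m * (c₁ * ‖toE (s • (Δinf *ᵥ e) - s • (Δ m *ᵥ e))‖) :=
            mul_le_mul_of_nonneg_left h9 hm0.le
        _ = c₁ * (m * ‖toE (s • (Δinf *ᵥ e) - s • (Δ m *ᵥ e))‖) := by ring
        _ ≤ c₁ * (η⁻¹*Cδ*X) := mul_le_mul_of_nonneg_left hρ₂n hc₁0.le
    nlinarith [b1, b2]
  have hCmB := hCb m hmMc
  have hfin1 : m * ‖toE ((Cm m - Cinf) *ᵥ u)‖ ≤ Cc * (c₁ * X) := by
    have h1 : ‖toE ((Cm m - Cinf) *ᵥ u)‖ ≤ (Cc/m) * ‖toE u‖ :=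
      le_trans (toE_mulVec_le _ _) (mul_le_mul_of_nonneg_right hCmB (norm_nonneg _))
    have h2 : ‖toE u‖ ≤ c₁ * X := part1 x
    have h3 : m * ((Cc/m) * ‖toE u‖) = Cc * ‖toE u‖ := by field_simp
    calc m * ‖toE ((Cm m - Cinf) *ᵥ u)‖ ≤ m * ((Cc/m) * ‖toE u‖) :=
          mul_le_mul_of_nonneg_left h1 hm0.le
      _ = Cc * ‖toE u‖ := h3
      _ ≤ Cc * (c₁ * X) := mul_le_mul_of_nonneg_left h2 hCc0
  have hfin2 : m * ‖toE (Cinf *ᵥ (u - s • e))‖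
      ≤ ‖Cinf‖ * ((c₂*(1 + η⁻¹*‖Δinf‖) + c₁*η⁻¹*Cδ) * X) := by
    have h1 : ‖toE (Cinf *ᵥ (u - s • e))‖ ≤ ‖Cinf‖ * ‖toE (u - s • e)‖ := toE_mulVec_le _ _
    calc m * ‖toE (Cinf *ᵥ (u - s • e))‖ ≤ m * (‖Cinf‖ * ‖toE (u - s • e)‖) :=
          mul_le_mul_of_nonneg_left h1 hm0.le
      _ = ‖Cinf‖ * (m * ‖toE (u - s • e)‖) := by ring
      _ ≤ ‖Cinf‖ * ((c₂*(1 + η⁻¹*‖Δinf‖) + c₁*η⁻¹*Cδ) * X) :=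
          mul_le_mul_of_nonneg_left hmid (norm_nonneg _)
  rw [div_mul_eq_mul_div, le_div_iff₀ hm0, hTx, toE_add]
  have tri := norm_add_le (toE ((Cm m - Cinf) *ᵥ u)) (toE (Cinf *ᵥ (u - s • e)))
  have tri' := mul_le_mul_of_nonneg_left tri hm0.le
  nlinarith [hfin1, hfin2, tri']
end

section
/- Let K(m) = m·N + Δ(m) (N SPSD with simple zero eigenvalue, unit kernel vector e, Δ(m) = Δ^∞ + O(m⁻¹), η := eᵀΔ^∞e > 0), and let D(m) = D^∞ + O(m⁻¹), B(m) = B^∞ + O(m⁻¹) be families of matrices of compatible sizes. Then the Schur complement S(m) := D(m) − B(m) K(m)^{-1} B(m)ᵀ satisfies S(m) = D^∞ − (B^∞ e) η^{-1} (eᵀ B^{∞ᵀ}) + O(m⁻¹); in particular, the limit S^∞ of S(m) is a rank-one perturbation of D^∞. -/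
open Matrix
open scoped Matrix.Norms.L2Operator

section helpers

variable {a b c d : ℕ}

private lemma mul_vmv_s9 (A : Matrix (Fin a) (Fin b) ℝ) (u : Fin b → ℝ) (v : Fin c → ℝ) :
    A * vecMulVec u v = vecMulVec (A *ᵥ u) v := by
  ext i j
  simp only [Matrix.mul_apply, vecMulVec_apply, mulVec, dotProduct, Finset.sum_mul]
  exact Finset.sum_congr rfl fun k _ => by ring

private lemma vmv_mul (u : Fin a → ℝ) (v : Fin b → ℝ) (A : Matrix (Fin b) (Fin c) ℝ) :
    vecMulVec u v * A = vecMulVec u (v ᵥ* A) := by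
  ext i j
  simp only [Matrix.mul_apply, vecMulVec_apply, vecMul, dotProduct, Finset.mul_sum]
  exact Finset.sum_congr rfl fun k _ => by ring

private lemma vmv_mul_vmv (u : Fin a → ℝ) (v x : Fin b → ℝ) (y : Fin c → ℝ) :
    vecMulVec u v * vecMulVec x y = (v ⬝ᵥ x) • vecMulVec u y := by
  ext i j
  simp only [Matrix.mul_apply, vecMulVec_apply, Matrix.smul_apply, smul_eq_mul, dotProduct,
    Finset.sum_mul]
  exact Finset.sum_congr rfl fun k _ => by ring

private lemma norm_transpose_eq (A : Matrix (Fin a) (Fin b) ℝ) : ‖Aᵀ‖ = ‖A‖ := by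
  rw [← Matrix.conjTranspose_eq_transpose_of_trivial]
  exact Matrix.l2_opNorm_conjTranspose A

private lemma norm_mul3_le (A : Matrix (Fin a) (Fin b) ℝ) (B : Matrix (Fin b) (Fin c) ℝ)
    (C : Matrix (Fin c) (Fin d) ℝ) : ‖A * B * C‖ ≤ ‖A‖ * ‖B‖ * ‖C‖ :=
  (Matrix.l2_opNorm_mul _ _).trans
    (mul_le_mul_of_nonneg_right (Matrix.l2_opNorm_mul _ _) (norm_nonneg _))

private lemma mul3_le {x y z X Y Z : ℝ} (hx : x ≤ X) (hy : y ≤ Y) (hz : z ≤ Z)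
    (hx0 : 0 ≤ x) (hy0 : 0 ≤ y) (hz0 : 0 ≤ z) : x * y * z ≤ X * Y * Z := by
  have hX := hx0.trans hx
  have hY := hy0.trans hy
  exact mul_le_mul (mul_le_mul hx hy hy0 hX) hz hz0 (mul_nonneg hX hY)

end helpers

set_option maxHeartbeats 1000000 in
theorem schur_complement_asymptotics {n p : ℕ}
    (N Δinf : Matrix (Fin n) (Fin n) ℝ) (Δ : ℝ → Matrix (Fin n) (Fin n) ℝ)
    (hN : N.PosSemidef) (e : Fin n → ℝ) (he : e ⬝ᵥ e = 1)
    (hker : N.mulVec e = 0)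
    (hsimple : ∀ x, N.mulVec x = 0 → ∃ c : ℝ, x = c • e)
    (hΔsym : ∀ m, (Δ m).IsHermitian)
    (hΔ : ∃ C M : ℝ, ∀ m ≥ M, ‖Δ m - Δinf‖ ≤ C / m)
    (K : ℝ → Matrix (Fin n) (Fin n) ℝ) (hK : ∀ m, K m = m • N + Δ m)
    (hinv : ∃ M₀ : ℝ, ∀ m ≥ M₀, IsUnit (K m).det)
    (η : ℝ) (hη : η = e ⬝ᵥ Δinf.mulVec e) (hηpos : 0 < η)
    (B : ℝ → Matrix (Fin p) (Fin n) ℝ) (Binf : Matrix (Fin p) (Fin n) ℝ)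
    (hB : ∃ C M : ℝ, ∀ m ≥ M, ‖B m - Binf‖ ≤ C / m)
    (D : ℝ → Matrix (Fin p) (Fin p) ℝ) (Dinf : Matrix (Fin p) (Fin p) ℝ)
    (hD : ∃ C M : ℝ, ∀ m ≥ M, ‖D m - Dinf‖ ≤ C / m)
    (S : ℝ → Matrix (Fin p) (Fin p) ℝ)
    (hS : ∀ m, S m = D m - B m * (K m)⁻¹ * (B m)ᵀ)
    (Sinf : Matrix (Fin p) (Fin p) ℝ)
    (hSinf : Sinf = Dinf - η⁻¹ • Matrix.vecMulVec (Binf.mulVec e) (Binf.mulVec e)) :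
    (∃ C M : ℝ, ∀ m ≥ M, ‖S m - Sinf‖ ≤ C / m) ∧ (Dinf - Sinf).rank ≤ 1 := by
  obtain ⟨CΔ, MΔ, hΔb⟩ := hΔ
  obtain ⟨CB, MB, hBb⟩ := hB
  obtain ⟨CD, MD, hDb⟩ := hD
  obtain ⟨M₀, hM₀⟩ := hinv
  have hη0 : η ≠ 0 := hηpos.ne'
  have hηinv0 : (0:ℝ) ≤ η⁻¹ := (inv_pos.mpr hηpos).le
  set u : Fin p → ℝ := Binf *ᵥ e with hu
  -- rank part
  have hrank : (Dinf - Sinf).rank ≤ 1 := by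
    have h1 : Dinf - Sinf = vecMulVec (η⁻¹ • u) u := by
      rw [hSinf]
      ext i j
      simp [vecMulVec_apply, Matrix.smul_apply, smul_eq_mul]
      ring
    rw [h1, vecMulVec_eq (Fin 1)]
    calc (replicateCol (Fin 1) (η⁻¹ • u) * replicateRow (Fin 1) u).rank
        ≤ (replicateCol (Fin 1) (η⁻¹ • u)).rank := Matrix.rank_mul_le_left _ _
      _ ≤ Fintype.card (Fin 1) := Matrix.rank_le_card_width _
      _ = 1 := by simp
  refine ⟨?_, hrank⟩
  -- setup
  set P : Matrix (Fin n) (Fin n) ℝ := vecMulVec e e with hP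
  have hPsymm : Pᵀ = P := by
    ext i j; simp [hP, vecMulVec_apply, mul_comm]
  have hPmulVec : ∀ x : Fin n → ℝ, P *ᵥ x = (e ⬝ᵥ x) • e := by
    intro x
    ext i
    simp only [hP, mulVec, dotProduct, vecMulVec_apply, Pi.smul_apply, smul_eq_mul,
      Finset.sum_mul]
    exact Finset.sum_congr rfl fun k _ => by ring
  set G : Matrix (Fin n) (Fin n) ℝ := N + P with hG
  have hGpd : G.PosDef := by
    refine Matrix.PosDef.of_dotProduct_mulVec_pos ?_ (fun x hx => ?_)
    · show Gᴴ = G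
      rw [Matrix.conjTranspose_eq_transpose_of_trivial, hG, Matrix.transpose_add, hPsymm]
      congr 1
      have hNt : Nᴴ = N := hN.1
      rwa [Matrix.conjTranspose_eq_transpose_of_trivial] at hNt
    · have hGx : star x ⬝ᵥ G *ᵥ x = x ⬝ᵥ N *ᵥ x + (e ⬝ᵥ x) * (e ⬝ᵥ x) := by
        rw [hG, Matrix.add_mulVec, dotProduct_add, hPmulVec, star_trivial]
        rw [dotProduct_smul, smul_eq_mul, dotProduct_comm x e]
      rw [hGx]
      have h2 : 0 ≤ x ⬝ᵥ N *ᵥ x := by simpa using hN.dotProduct_mulVec_nonneg x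
      have h3 : 0 ≤ (e ⬝ᵥ x) * (e ⬝ᵥ x) := mul_self_nonneg _
      rcases eq_or_lt_of_le h2 with h4 | h4
      · -- x ⬝ᵥ N x = 0 forces N x = 0 hence x = c e, and then e⬝x = c ≠ 0
        have hNx : N *ᵥ x = 0 := by
          rw [← hN.dotProduct_mulVec_zero_iff x, star_trivial]
          exact h4.symm
        obtain ⟨c, rfl⟩ := hsimple x hNx
        have hc : c ≠ 0 := by
          rintro rfl; simp at hx
        have hex : e ⬝ᵥ (c • e) = c := by
          rw [dotProduct_smul, smul_eq_mul, he, mul_one]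
        rw [hex, ← h4, zero_add]
        exact mul_self_pos.mpr hc
      · linarith
  have hGdet : IsUnit G.det := (Matrix.isUnit_iff_isUnit_det G).mp hGpd.isUnit
  have hGG : G * G⁻¹ = 1 := Matrix.mul_nonsing_inv _ hGdet
  have hGG' : G⁻¹ * G = 1 := Matrix.nonsing_inv_mul _ hGdet
  have hNP : N * P = 0 := by
    rw [hP, mul_vmv_s9, hker]
    ext i j; simp [vecMulVec_apply]
  have hPP : P * P = P := by
    rw [hP, vmv_mul_vmv, he, one_smul]
  have hGP : G * P = P := by
    rw [hG, Matrix.add_mul, hNP, hPP, zero_add]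
  have hGiP : G⁻¹ * P = P := by
    calc G⁻¹ * P = G⁻¹ * (G * P) := by rw [hGP]
      _ = (G⁻¹ * G) * P := by rw [Matrix.mul_assoc]
      _ = P := by rw [hGG', Matrix.one_mul]
  have hPGi : P * G⁻¹ = P := by
    have hGsym : Gᵀ = G := by
      have h0 : Gᴴ = G := hGpd.1
      rwa [Matrix.conjTranspose_eq_transpose_of_trivial] at h0
    have h1 := congrArg Matrix.transpose hGiP
    rw [Matrix.transpose_mul, hPsymm, Matrix.transpose_nonsing_inv, hGsym] at h1
    exact h1
  have hNGi : N * G⁻¹ = 1 - P := by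
    have hNeq : N = G - P := by rw [hG]; abel
    rw [hNeq, Matrix.sub_mul, hGG, hPGi]
  have hPΔP : P * (Δinf * P) = η • P := by
    rw [hP, mul_vmv_s9, vmv_mul_vmv]
    congr 1
    rw [hη, dotProduct_mulVec]
  set Y : Matrix (Fin n) (Fin n) ℝ := G⁻¹ * (1 - η⁻¹ • (Δinf * P)) with hY
  have hNY : N * Y = 1 - η⁻¹ • (Δinf * P) := by
    rw [hY, ← Matrix.mul_assoc, hNGi, Matrix.sub_mul, Matrix.one_mul, Matrix.mul_sub,
      Matrix.mul_one, Matrix.mul_smul, hPΔP, smul_smul, inv_mul_cancel₀ hη0, one_smul]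
    abel
  -- constants
  set CΔ' : ℝ := max CΔ 0 with hCΔ'
  set CB' : ℝ := max CB 0 with hCB'
  set CD' : ℝ := max CD 0 with hCD'
  have hCΔ0 : (0:ℝ) ≤ CΔ' := le_max_right _ _
  have hCB0 : (0:ℝ) ≤ CB' := le_max_right _ _
  have hCD0 : (0:ℝ) ≤ CD' := le_max_right _ _
  set c₁ : ℝ := η⁻¹ * CΔ' * ‖P‖ + (‖Δinf‖ + CΔ') * ‖Y‖ with hc₁
  set c₂ : ℝ := η⁻¹ * ‖P‖ + ‖Y‖ with hc₂
  set c₃ : ℝ := ‖Y‖ + 2 * c₂ * c₁ with hc₃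
  set cB : ℝ := ‖Binf‖ + CB' with hcB
  have hc₁0 : 0 ≤ c₁ := by positivity
  have hc₂0 : 0 ≤ c₂ := by positivity
  have hcB0 : 0 ≤ cB := by positivity
  refine ⟨CD' + (CB' * (2 * c₂) * cB + ‖Binf‖ * c₃ * cB + ‖Binf‖ * (η⁻¹ * ‖P‖) * CB'),
    max (max (max MΔ MB) (max MD M₀)) (max 1 (2 * c₁)), fun m hm => ?_⟩
  have hm1 : (1:ℝ) ≤ m := le_trans (le_trans (le_max_left _ _) (le_max_right _ _)) hm
  have hm0 : (0:ℝ) < m := lt_of_lt_of_le one_pos hm1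
  have hm0' : m ≠ 0 := hm0.ne'
  have hmc₁ : 2 * c₁ ≤ m := le_trans (le_trans (le_max_right _ _) (le_max_right _ _)) hm
  have hmΔ : MΔ ≤ m :=
    le_trans (le_trans (le_trans (le_max_left _ _) (le_max_left _ _)) (le_max_left _ _)) hm
  have hmB : MB ≤ m :=
    le_trans (le_trans (le_trans (le_max_right _ _) (le_max_left _ _)) (le_max_left _ _)) hm
  have hmD : MD ≤ m :=
    le_trans (le_trans (le_trans (le_max_left _ _) (le_max_right _ _)) (le_max_left _ _)) hm
  have hmM₀ : M₀ ≤ m :=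
    le_trans (le_trans (le_trans (le_max_right _ _) (le_max_right _ _)) (le_max_left _ _)) hm
  -- basic bounds
  have hΔd : ‖Δ m - Δinf‖ ≤ CΔ' / m :=
    le_trans (hΔb m hmΔ) (by gcongr; exact le_max_left _ _)
  have hBd : ‖B m - Binf‖ ≤ CB' / m :=
    le_trans (hBb m hmB) (by gcongr; exact le_max_left _ _)
  have hDd : ‖D m - Dinf‖ ≤ CD' / m :=
    le_trans (hDb m hmD) (by gcongr; exact le_max_left _ _)
  have hΔm : ‖Δ m‖ ≤ ‖Δinf‖ + CΔ' := by
    have h1 : Δ m = Δinf + (Δ m - Δinf) := by abel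
    calc ‖Δ m‖ = ‖Δinf + (Δ m - Δinf)‖ := by rw [← h1]
      _ ≤ ‖Δinf‖ + ‖Δ m - Δinf‖ := norm_add_le _ _
      _ ≤ ‖Δinf‖ + CΔ' / m := by linarith
      _ ≤ ‖Δinf‖ + CΔ' := by
          have : CΔ' / m ≤ CΔ' := div_le_self hCΔ0 hm1
          linarith
  have hBm : ‖B m‖ ≤ cB := by
    have h1 : B m = Binf + (B m - Binf) := by abel
    have h2 : CB' / m ≤ CB' := div_le_self hCB0 hm1
    calc ‖B m‖ = ‖Binf + (B m - Binf)‖ := by rw [← h1]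
      _ ≤ ‖Binf‖ + ‖B m - Binf‖ := norm_add_le _ _
      _ ≤ cB := by rw [hcB]; linarith
  -- approximate inverse
  set X : Matrix (Fin n) (Fin n) ℝ := η⁻¹ • P + m⁻¹ • Y with hX
  set E : Matrix (Fin n) (Fin n) ℝ := η⁻¹ • ((Δ m - Δinf) * P) + m⁻¹ • (Δ m * Y) with hE
  have hKX : K m * X = 1 + E := by
    rw [hK m, hX, hE]
    simp only [Matrix.add_mul, Matrix.mul_add, Matrix.smul_mul, Matrix.mul_smul, smul_smul,
      smul_add, hNP, smul_zero, mul_inv_cancel₀ hm0', inv_mul_cancel₀ hm0', one_smul, hNY,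
      Matrix.sub_mul, smul_sub, zero_add, ← mul_assoc, one_mul]
    abel
  have hEn : ‖E‖ ≤ c₁ / m := by
    have h1 : ‖η⁻¹ • ((Δ m - Δinf) * P)‖ ≤ η⁻¹ * (CΔ' / m * ‖P‖) := by
      rw [norm_smul, Real.norm_eq_abs, abs_of_nonneg hηinv0]
      refine mul_le_mul_of_nonneg_left ?_ hηinv0
      calc ‖(Δ m - Δinf) * P‖ ≤ ‖Δ m - Δinf‖ * ‖P‖ := Matrix.l2_opNorm_mul _ _
        _ ≤ CΔ' / m * ‖P‖ := mul_le_mul_of_nonneg_right hΔd (norm_nonneg _)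
    have h2 : ‖m⁻¹ • (Δ m * Y)‖ ≤ m⁻¹ * ((‖Δinf‖ + CΔ') * ‖Y‖) := by
      rw [norm_smul, Real.norm_eq_abs, abs_of_nonneg (inv_nonneg.mpr hm0.le)]
      refine mul_le_mul_of_nonneg_left ?_ (inv_nonneg.mpr hm0.le)
      calc ‖Δ m * Y‖ ≤ ‖Δ m‖ * ‖Y‖ := Matrix.l2_opNorm_mul _ _
        _ ≤ (‖Δinf‖ + CΔ') * ‖Y‖ := mul_le_mul_of_nonneg_right hΔm (norm_nonneg _)
    have h3 : η⁻¹ * (CΔ' / m * ‖P‖) + m⁻¹ * ((‖Δinf‖ + CΔ') * ‖Y‖) = c₁ / m := by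
      rw [hc₁]; field_simp
    calc ‖E‖ ≤ ‖η⁻¹ • ((Δ m - Δinf) * P)‖ + ‖m⁻¹ • (Δ m * Y)‖ := norm_add_le _ _
      _ ≤ η⁻¹ * (CΔ' / m * ‖P‖) + m⁻¹ * ((‖Δinf‖ + CΔ') * ‖Y‖) := add_le_add h1 h2
      _ = c₁ / m := h3
  have hEhalf : ‖E‖ ≤ 1 / 2 := by
    refine le_trans hEn ?_
    rw [div_le_div_iff₀ hm0 two_pos]
    linarith
  have hXn : ‖X‖ ≤ c₂ := by
    have h1 : ‖η⁻¹ • P‖ = η⁻¹ * ‖P‖ := by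
      rw [norm_smul, Real.norm_eq_abs, abs_of_nonneg hηinv0]
    have h2 : ‖m⁻¹ • Y‖ ≤ ‖Y‖ := by
      rw [norm_smul, Real.norm_eq_abs, abs_of_nonneg (inv_nonneg.mpr hm0.le)]
      have hminv1 : m⁻¹ ≤ 1 := by
        rw [inv_le_one_iff₀]; right; exact hm1
      exact mul_le_of_le_one_left (norm_nonneg _) hminv1
    calc ‖X‖ ≤ ‖η⁻¹ • P‖ + ‖m⁻¹ • Y‖ := norm_add_le _ _
      _ ≤ η⁻¹ * ‖P‖ + ‖Y‖ := by rw [h1]; linarith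
      _ = c₂ := hc₂.symm
  have hdet : IsUnit (K m).det := hM₀ m hmM₀
  have hKiK : (K m)⁻¹ * K m = 1 := Matrix.nonsing_inv_mul _ hdet
  have hXeq : X = (K m)⁻¹ + (K m)⁻¹ * E := by
    have h1 : (K m)⁻¹ * (K m * X) = (K m)⁻¹ * (1 + E) := by rw [hKX]
    rw [← Matrix.mul_assoc, hKiK, Matrix.one_mul, Matrix.mul_add, Matrix.mul_one] at h1
    exact h1
  have hKieq : (K m)⁻¹ = X - (K m)⁻¹ * E := by rw [hXeq]; abel
  have hKin : ‖(K m)⁻¹‖ ≤ 2 * c₂ := by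
    have h2 : ‖(K m)⁻¹ * E‖ ≤ ‖(K m)⁻¹‖ * (1 / 2) :=
      le_trans (Matrix.l2_opNorm_mul _ _) (mul_le_mul_of_nonneg_left hEhalf (norm_nonneg _))
    have h3 : ‖(K m)⁻¹‖ ≤ ‖X‖ + ‖(K m)⁻¹ * E‖ := by
      have h := norm_sub_le X ((K m)⁻¹ * E)
      rw [← hKieq] at h
      exact h
    have h6 : ‖(K m)⁻¹‖ ≤ c₂ + ‖(K m)⁻¹‖ * (1 / 2) := h3.trans (add_le_add hXn h2)
    linarith
  have hKdiff : ‖(K m)⁻¹ - η⁻¹ • P‖ ≤ c₃ / m := by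
    have h1 : (K m)⁻¹ - η⁻¹ • P = m⁻¹ • Y - (K m)⁻¹ * E := by
      conv_lhs => rw [hKieq, hX]
      abel
    have h2 : ‖m⁻¹ • Y‖ ≤ ‖Y‖ / m := by
      rw [norm_smul, Real.norm_eq_abs, abs_of_nonneg (inv_nonneg.mpr hm0.le)]
      rw [div_eq_inv_mul]
    have h3 : ‖(K m)⁻¹ * E‖ ≤ 2 * c₂ * (c₁ / m) := by
      refine le_trans (Matrix.l2_opNorm_mul _ _) ?_
      exact mul_le_mul hKin hEn (norm_nonneg _) (by positivity)
    have h4 : ‖Y‖ / m + 2 * c₂ * (c₁ / m) = c₃ / m := by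
      rw [hc₃]; field_simp
    have h5 : ‖(K m)⁻¹ - η⁻¹ • P‖ ≤ ‖m⁻¹ • Y‖ + ‖(K m)⁻¹ * E‖ := by
      rw [h1]; exact norm_sub_le _ _
    linarith
  -- rewrite Sinf tail
  have hZ : η⁻¹ • vecMulVec u u = Binf * (η⁻¹ • P) * Binfᵀ := by
    rw [Matrix.mul_smul, Matrix.smul_mul]
    congr 1
    rw [hP, mul_vmv_s9, vmv_mul, Matrix.vecMul_transpose, ← hu]
  have hZn : ‖η⁻¹ • P‖ = η⁻¹ * ‖P‖ := by
    rw [norm_smul, Real.norm_eq_abs, abs_of_nonneg hηinv0]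
  -- telescoping
  have htel : B m * (K m)⁻¹ * (B m)ᵀ - Binf * (η⁻¹ • P) * Binfᵀ
      = (B m - Binf) * (K m)⁻¹ * (B m)ᵀ + Binf * ((K m)⁻¹ - η⁻¹ • P) * (B m)ᵀ
        + Binf * (η⁻¹ • P) * (B m - Binf)ᵀ := by
    simp only [Matrix.sub_mul, Matrix.mul_sub, Matrix.transpose_sub]
    abel
  have hBmT : ‖(B m)ᵀ‖ ≤ cB := by rw [norm_transpose_eq]; exact hBm
  have ht1 : ‖(B m - Binf) * (K m)⁻¹ * (B m)ᵀ‖ ≤ CB' / m * (2 * c₂) * cB :=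
    le_trans (norm_mul3_le _ _ _)
      (mul3_le hBd hKin hBmT (norm_nonneg _) (norm_nonneg _) (norm_nonneg _))
  have ht2 : ‖Binf * ((K m)⁻¹ - η⁻¹ • P) * (B m)ᵀ‖ ≤ ‖Binf‖ * (c₃ / m) * cB :=
    le_trans (norm_mul3_le _ _ _)
      (mul3_le le_rfl hKdiff hBmT (norm_nonneg _) (norm_nonneg _) (norm_nonneg _))
  have ht3 : ‖Binf * (η⁻¹ • P) * (B m - Binf)ᵀ‖ ≤ ‖Binf‖ * (η⁻¹ * ‖P‖) * (CB' / m) := by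
    refine le_trans (norm_mul3_le _ _ _) ?_
    rw [hZn]
    refine mul3_le le_rfl le_rfl ?_ (norm_nonneg _) (by positivity) (norm_nonneg _)
    rw [norm_transpose_eq]; exact hBd
  -- final assembly
  have hSm : S m - Sinf = (D m - Dinf)
      - ((B m - Binf) * (K m)⁻¹ * (B m)ᵀ + Binf * ((K m)⁻¹ - η⁻¹ • P) * (B m)ᵀ
        + Binf * (η⁻¹ • P) * (B m - Binf)ᵀ) := by
    rw [hS m, hSinf, hZ, ← htel]
    abel
  calc ‖S m - Sinf‖
      ≤ ‖D m - Dinf‖ + ‖(B m - Binf) * (K m)⁻¹ * (B m)ᵀ + Binf * ((K m)⁻¹ - η⁻¹ • P) * (B m)ᵀ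
        + Binf * (η⁻¹ • P) * (B m - Binf)ᵀ‖ := by rw [hSm]; exact norm_sub_le _ _
    _ ≤ ‖D m - Dinf‖ + (‖(B m - Binf) * (K m)⁻¹ * (B m)ᵀ‖
        + ‖Binf * ((K m)⁻¹ - η⁻¹ • P) * (B m)ᵀ‖ + ‖Binf * (η⁻¹ • P) * (B m - Binf)ᵀ‖) := by
        have := norm_add₃_le (a := (B m - Binf) * (K m)⁻¹ * (B m)ᵀ)
          (b := Binf * ((K m)⁻¹ - η⁻¹ • P) * (B m)ᵀ) (c := Binf * (η⁻¹ • P) * (B m - Binf)ᵀ)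
        linarith
    _ ≤ CD' / m + (CB' / m * (2 * c₂) * cB + ‖Binf‖ * (c₃ / m) * cB
        + ‖Binf‖ * (η⁻¹ * ‖P‖) * (CB' / m)) := by linarith
    _ = (CD' + (CB' * (2 * c₂) * cB + ‖Binf‖ * c₃ * cB + ‖Binf‖ * (η⁻¹ * ‖P‖) * CB')) / m := by
        field_simp
end

section
/- Let K(m) be an invertible 2×2 block system [[K_HH(m), K_HL(m)],[K_LH(m), K_LL(m)]] with right-hand side (b_H, b_L), such that K_HH(m)^{-1} = e_H η^{-1} e_Hᵀ + O(m⁻¹), the Schur complement satisfies S(m)^{-1} = (S^∞)^{-1} + O(m⁻¹) with S^∞ invertible, and K_HL(m) = K_HL^∞ + O(m⁻¹), K_LH(m) = K_LH^∞ + O(m⁻¹). Then the solution block x_H(m) satisfies x_H(m) = c_H·e_H + O(m⁻¹) where c_H = η^{-1} e_Hᵀ (b_H − K_HL^∞ x_L^∞) and x_L^∞ = (S^∞)^{-1}(b_L − K_LH^∞ e_H η^{-1} e_Hᵀ b_H); i.e., asymptotically the solution over the highly-diffusive island is a constant vector. -/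
open Matrix
open scoped Matrix.Norms.L2Operator

section Aux
variable {E F G : Type*} [SeminormedAddCommGroup E] [SeminormedAddCommGroup F]
  [SeminormedAddCommGroup G]

def IsO1 (f : ℝ → E) : Prop := ∃ C M : ℝ, 1 ≤ M ∧ ∀ m ≥ M, ‖f m‖ ≤ C / m

def IsBdd (f : ℝ → E) : Prop := ∃ C M : ℝ, ∀ m ≥ M, ‖f m‖ ≤ C

lemma isO1_of {f : ℝ → E} (h : ∃ C M : ℝ, ∀ m ≥ M, ‖f m‖ ≤ C / m) : IsO1 f := by
  obtain ⟨C, M, h⟩ := h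
  exact ⟨C, max M 1, le_max_right _ _, fun m hm => h m (le_trans (le_max_left _ _) hm)⟩

lemma IsO1.congr {f g : ℝ → E} (hf : IsO1 f) (M₀ : ℝ) (h : ∀ m ≥ M₀, f m = g m) : IsO1 g := by
  obtain ⟨C, M, hM, hf⟩ := hf
  refine ⟨C, max M M₀, le_trans hM (le_max_left _ _), fun m hm => ?_⟩
  rw [← h m (le_trans (le_max_right _ _) hm)]
  exact hf m (le_trans (le_max_left _ _) hm)

lemma IsO1.add {f g : ℝ → E} (hf : IsO1 f) (hg : IsO1 g) :
    IsO1 (fun m => f m + g m) := by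
  obtain ⟨C, M, hM, hf⟩ := hf
  obtain ⟨D, N, hN, hg⟩ := hg
  refine ⟨C + D, max M N, le_trans hM (le_max_left _ _), fun m hm => ?_⟩
  have h1 := hf m (le_trans (le_max_left _ _) hm)
  have h2 := hg m (le_trans (le_max_right _ _) hm)
  calc ‖f m + g m‖ ≤ ‖f m‖ + ‖g m‖ := norm_add_le _ _
    _ ≤ C / m + D / m := add_le_add h1 h2
    _ = (C + D) / m := by ring

lemma IsO1.neg {f : ℝ → E} (hf : IsO1 f) : IsO1 (fun m => -f m) := by
  obtain ⟨C, M, hM, hf⟩ := hf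
  exact ⟨C, M, hM, fun m hm => by rw [norm_neg]; exact hf m hm⟩

lemma IsO1.bdd {f : ℝ → E} (hf : IsO1 f) : IsBdd f := by
  obtain ⟨C, M, hM, hf⟩ := hf
  refine ⟨|C|, M, fun m hm => ?_⟩
  have hm1 : (1 : ℝ) ≤ m := le_trans hM hm
  have hmpos : (0 : ℝ) < m := lt_of_lt_of_le one_pos hm1
  calc ‖f m‖ ≤ C / m := hf m hm
    _ ≤ |C| / m := by gcongr; exact le_abs_self C
    _ ≤ |C| := div_le_self (abs_nonneg C) hm1

lemma IsBdd.of_sub (x : E) {f : ℝ → E} (h : IsBdd (fun m => f m - x)) : IsBdd f := by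
  obtain ⟨C, M, h⟩ := h
  refine ⟨C + ‖x‖, M, fun m hm => ?_⟩
  calc ‖f m‖ = ‖(f m - x) + x‖ := by rw [sub_add_cancel]
    _ ≤ ‖f m - x‖ + ‖x‖ := norm_add_le _ _
    _ ≤ C + ‖x‖ := by gcongr; exact h m hm

lemma IsBdd.const (x : E) : IsBdd (fun _ : ℝ => x) := ⟨‖x‖, 1, fun _ _ => le_rfl⟩

lemma IsO1.op_bdd {B : E → F → G} {c : ℝ} (hc : 0 ≤ c)
    (hB : ∀ e f, ‖B e f‖ ≤ c * ‖e‖ * ‖f‖)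
    {f : ℝ → E} {g : ℝ → F} (hf : IsO1 f) (hg : IsBdd g) :
    IsO1 (fun m => B (f m) (g m)) := by
  obtain ⟨C, M, hM, hf⟩ := hf
  obtain ⟨D, N, hg⟩ := hg
  refine ⟨c * C * max D 0, max M N, le_trans hM (le_max_left _ _), fun m hm => ?_⟩
  have h1 := hf m (le_trans (le_max_left _ _) hm)
  have h2 : ‖g m‖ ≤ max D 0 := le_trans (hg m (le_trans (le_max_right _ _) hm)) (le_max_left _ _)
  have h3 : (0:ℝ) ≤ C / m := le_trans (norm_nonneg _) h1
  calc ‖B (f m) (g m)‖ ≤ c * ‖f m‖ * ‖g m‖ := hB _ _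
    _ ≤ c * (C / m) * max D 0 := by
        apply mul_le_mul _ h2 (norm_nonneg _) (mul_nonneg hc h3)
        exact mul_le_mul_of_nonneg_left h1 hc
    _ = c * C * max D 0 / m := by ring

lemma IsBdd.op_O1 {B : E → F → G} {c : ℝ} (hc : 0 ≤ c)
    (hB : ∀ e f, ‖B e f‖ ≤ c * ‖e‖ * ‖f‖)
    {f : ℝ → E} {g : ℝ → F} (hf : IsBdd f) (hg : IsO1 g) :
    IsO1 (fun m => B (f m) (g m)) := by
  obtain ⟨D, N, hf⟩ := hf
  obtain ⟨C, M, hM, hg⟩ := hg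
  refine ⟨c * max D 0 * C, max M N, le_trans hM (le_max_left _ _), fun m hm => ?_⟩
  have h2 := hg m (le_trans (le_max_left _ _) hm)
  have h1 : ‖f m‖ ≤ max D 0 := le_trans (hf m (le_trans (le_max_right _ _) hm)) (le_max_left _ _)
  have h3 : (0:ℝ) ≤ C / m := le_trans (norm_nonneg _) h2
  calc ‖B (f m) (g m)‖ ≤ c * ‖f m‖ * ‖g m‖ := hB _ _
    _ ≤ c * max D 0 * (C / m) :=
        mul_le_mul (mul_le_mul_of_nonneg_left h1 hc) h2 (norm_nonneg _)
          (mul_nonneg hc (le_max_right D 0))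
    _ = c * max D 0 * C / m := by ring

lemma IsBdd.op_bdd {B : E → F → G} {c : ℝ} (hc : 0 ≤ c)
    (hB : ∀ e f, ‖B e f‖ ≤ c * ‖e‖ * ‖f‖)
    {f : ℝ → E} {g : ℝ → F} (hf : IsBdd f) (hg : IsBdd g) :
    IsBdd (fun m => B (f m) (g m)) := by
  obtain ⟨C, M, hf⟩ := hf
  obtain ⟨D, N, hg⟩ := hg
  refine ⟨c * max C 0 * max D 0, max M N, fun m hm => ?_⟩
  have h1 : ‖f m‖ ≤ max C 0 := le_trans (hf m (le_trans (le_max_left _ _) hm)) (le_max_left _ _)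
  have h2 : ‖g m‖ ≤ max D 0 := le_trans (hg m (le_trans (le_max_right _ _) hm)) (le_max_left _ _)
  calc ‖B (f m) (g m)‖ ≤ c * ‖f m‖ * ‖g m‖ := hB _ _
    _ ≤ c * max C 0 * max D 0 :=
        mul_le_mul (mul_le_mul_of_nonneg_left h1 hc) h2 (norm_nonneg _)
          (mul_nonneg hc (le_max_right C 0))

end Aux

lemma sub_decomp {p q : ℕ} (X Y : Matrix (Fin p) (Fin q) ℝ) (a b : Fin q → ℝ) :
    (X - Y).mulVec a + Y.mulVec (a - b) = X.mulVec a - Y.mulVec b := by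
  rw [Matrix.sub_mulVec, Matrix.mulVec_sub]; abel

lemma exists_mulVec_bound (a b : ℕ) : ∃ c : ℝ, 0 ≤ c ∧
    ∀ (A : Matrix (Fin a) (Fin b) ℝ) (v : Fin b → ℝ), ‖A.mulVec v‖ ≤ c * ‖A‖ * ‖v‖ := by
  let T : Matrix (Fin a) (Fin b) ℝ →L[ℝ] (Fin b → ℝ) →L[ℝ] (Fin a → ℝ) :=
    LinearMap.toContinuousLinearMap
      (LinearMap.toContinuousLinearMap.toLinearMap.comp Matrix.toLin'.toLinearMap)
  refine ⟨‖T‖, ContinuousLinearMap.opNorm_nonneg T, fun A v => ?_⟩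
  have h0 : (T A) v = A.mulVec v := by
    simp [T, Matrix.toLin'_apply]
  calc ‖A.mulVec v‖ = ‖(T A) v‖ := by rw [h0]
    _ ≤ ‖T A‖ * ‖v‖ := (T A).le_opNorm v
    _ ≤ ‖T‖ * ‖A‖ * ‖v‖ := by
        apply mul_le_mul_of_nonneg_right (T.le_opNorm A) (norm_nonneg _)
lemma smul_vecMulVec_mulVec {n : ℕ} (e : Fin n → ℝ) (η : ℝ) (w : Fin n → ℝ) :
    (η⁻¹ • Matrix.vecMulVec e e).mulVec w = (η⁻¹ * (e ⬝ᵥ w)) • e := by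
  funext i
  simp only [Matrix.mulVec, dotProduct, Matrix.smul_apply, Matrix.vecMulVec_apply,
    smul_eq_mul, Pi.smul_apply, Finset.mul_sum, Finset.sum_mul]
  exact Finset.sum_congr rfl (fun j _ => by ring)

theorem island_solution_constant {nH nL : ℕ}
    (K_HH : ℝ → Matrix (Fin nH) (Fin nH) ℝ)
    (K_HL : ℝ → Matrix (Fin nH) (Fin nL) ℝ)
    (K_LH : ℝ → Matrix (Fin nL) (Fin nH) ℝ)
    (K_LL : ℝ → Matrix (Fin nL) (Fin nL) ℝ)
    (b_H : Fin nH → ℝ) (b_L : Fin nL → ℝ)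
    (x_H : ℝ → Fin nH → ℝ) (x_L : ℝ → Fin nL → ℝ)
    (hsolve : ∀ m ≥ (1 : ℝ),
      (K_HH m).mulVec (x_H m) + (K_HL m).mulVec (x_L m) = b_H ∧
      (K_LH m).mulVec (x_H m) + (K_LL m).mulVec (x_L m) = b_L)
    (e_H : Fin nH → ℝ) (η : ℝ) (hηpos : 0 < η)
    (hKHHdet : ∀ m ≥ (1 : ℝ), IsUnit (K_HH m).det)
    (hKHHinv : ∃ C M : ℝ, ∀ m ≥ M,
      ‖(K_HH m)⁻¹ - η⁻¹ • Matrix.vecMulVec e_H e_H‖ ≤ C / m)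
    (S : ℝ → Matrix (Fin nL) (Fin nL) ℝ)
    (hS : ∀ m, S m = K_LL m - K_LH m * (K_HH m)⁻¹ * K_HL m)
    (hSdet : ∀ m ≥ (1 : ℝ), IsUnit (S m).det)
    (Sinf : Matrix (Fin nL) (Fin nL) ℝ) (hSinfdet : IsUnit Sinf.det)
    (hSinv : ∃ C M : ℝ, ∀ m ≥ M, ‖(S m)⁻¹ - Sinf⁻¹‖ ≤ C / m)
    (K_HLinf : Matrix (Fin nH) (Fin nL) ℝ)
    (hKHL : ∃ C M : ℝ, ∀ m ≥ M, ‖K_HL m - K_HLinf‖ ≤ C / m)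
    (K_LHinf : Matrix (Fin nL) (Fin nH) ℝ)
    (hKLH : ∃ C M : ℝ, ∀ m ≥ M, ‖K_LH m - K_LHinf‖ ≤ C / m)
    (x_Linf : Fin nL → ℝ)
    (hxLinf : x_Linf =
      Sinf⁻¹.mulVec (b_L - (K_LHinf * (η⁻¹ • Matrix.vecMulVec e_H e_H)).mulVec b_H))
    (c_H : ℝ)
    (hcH : c_H = η⁻¹ * (e_H ⬝ᵥ (b_H - K_HLinf.mulVec x_Linf))) :
    ∃ C M : ℝ, ∀ m ≥ M, ‖x_H m - c_H • e_H‖ ≤ C / m := by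
  -- bilinear bounds for mulVec in the four shapes we need
  obtain ⟨cHH, hcHH0, hcHH⟩ := exists_mulVec_bound nH nH
  obtain ⟨cHL, hcHL0, hcHL⟩ := exists_mulVec_bound nH nL
  obtain ⟨cLH, hcLH0, hcLH⟩ := exists_mulVec_bound nL nH
  obtain ⟨cLL, hcLL0, hcLL⟩ := exists_mulVec_bound nL nL
  set P : Matrix (Fin nH) (Fin nH) ℝ := η⁻¹ • Matrix.vecMulVec e_H e_H with hP
  set A : ℝ → Matrix (Fin nH) (Fin nH) ℝ := fun m => (K_HH m)⁻¹ with hA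
  set v : ℝ → Fin nL → ℝ := fun m => b_L - (K_LH m).mulVec ((A m).mulVec b_H) with hv
  set vinf : Fin nL → ℝ := b_L - K_LHinf.mulVec (P.mulVec b_H) with hvinf
  set u : ℝ → Fin nH → ℝ := fun m => b_H - (K_HL m).mulVec (x_L m) with hu
  set uinf : Fin nH → ℝ := b_H - K_HLinf.mulVec x_Linf with huinf
  -- basic O(1/m) facts
  have hdA : IsO1 (fun m => A m - P) := isO1_of hKHHinv
  have hdS : IsO1 (fun m => (S m)⁻¹ - Sinf⁻¹) := isO1_of hSinv
  have hdHL : IsO1 (fun m => K_HL m - K_HLinf) := isO1_of hKHL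
  have hdLH : IsO1 (fun m => K_LH m - K_LHinf) := isO1_of hKLH
  have hAbdd : IsBdd A := IsBdd.of_sub P hdA.bdd
  -- v m - vinf is O(1/m)
  have hAb : IsBdd (fun m => (A m).mulVec b_H) :=
    hAbdd.op_bdd hcHH0 hcHH (IsBdd.const b_H)
  have hvdiff : IsO1 (fun m => v m - vinf) := by
    have h1 : IsO1 (fun m => (K_LH m - K_LHinf).mulVec ((A m).mulVec b_H)) :=
      hdLH.op_bdd hcLH0 hcLH hAb
    have h2 : IsO1 (fun m => K_LHinf.mulVec ((A m - P).mulVec b_H)) :=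
      (IsBdd.const K_LHinf).op_O1 hcLH0 hcLH (hdA.op_bdd hcHH0 hcHH (IsBdd.const b_H))
    refine ((h1.add h2).neg).congr 1 (fun m _ => ?_)
    simp only [hv, hvinf, Matrix.sub_mulVec, Matrix.mulVec_sub]
    abel
  have hvbdd : IsBdd v := IsBdd.of_sub vinf hvdiff.bdd
  -- solution formulas
  have hx_Hf : ∀ m ≥ (1:ℝ), x_H m = (A m).mulVec (u m) := by
    intro m hm
    have hinv : (K_HH m)⁻¹ * K_HH m = 1 := Matrix.nonsing_inv_mul _ (hKHHdet m hm)
    have h1 : (K_HH m).mulVec (x_H m) = b_H - (K_HL m).mulVec (x_L m) :=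
      eq_sub_of_add_eq (hsolve m hm).1
    calc x_H m = ((K_HH m)⁻¹ * K_HH m).mulVec (x_H m) := by rw [hinv, Matrix.one_mulVec]
      _ = (A m).mulVec ((K_HH m).mulVec (x_H m)) := (Matrix.mulVec_mulVec _ _ _).symm
      _ = (A m).mulVec (u m) := by rw [h1]
  have hx_Lf : ∀ m ≥ (1:ℝ), x_L m = ((S m)⁻¹).mulVec (v m) := by
    intro m hm
    have hinvH : (K_HH m)⁻¹ * K_HH m = 1 := Matrix.nonsing_inv_mul _ (hKHHdet m hm)
    have hAK : ∀ w, (A m).mulVec ((K_HH m).mulVec w) = w := fun w => by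
      rw [Matrix.mulVec_mulVec, hinvH, Matrix.one_mulVec]
    have hKHLx : (K_HL m).mulVec (x_L m) = b_H - (K_HH m).mulVec (x_H m) :=
      eq_sub_of_add_eq' (hsolve m hm).1
    have h2 := (hsolve m hm).2
    have hSx : (S m).mulVec (x_L m) = v m := by
      rw [hS m]
      have e1 : (K_LH m * (K_HH m)⁻¹ * K_HL m).mulVec (x_L m)
          = (K_LH m).mulVec ((A m).mulVec ((K_HL m).mulVec (x_L m))) := by
        rw [Matrix.mulVec_mulVec, Matrix.mulVec_mulVec]
      rw [Matrix.sub_mulVec, e1, hKHLx, Matrix.mulVec_sub, hAK, Matrix.mulVec_sub]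
      rw [hv]
      simp only
      rw [← h2]
      abel
    have hinvS : (S m)⁻¹ * S m = 1 := Matrix.nonsing_inv_mul _ (hSdet m hm)
    calc x_L m = ((S m)⁻¹ * S m).mulVec (x_L m) := by rw [hinvS, Matrix.one_mulVec]
      _ = ((S m)⁻¹).mulVec ((S m).mulVec (x_L m)) := (Matrix.mulVec_mulVec _ _ _).symm
      _ = ((S m)⁻¹).mulVec (v m) := by rw [hSx]
  have hxLinf' : x_Linf = Sinf⁻¹.mulVec vinf := by
    rw [hxLinf, hvinf, hP, ← Matrix.mulVec_mulVec]
  -- x_L m - x_Linf is O(1/m)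
  have hxLdiff : IsO1 (fun m => x_L m - x_Linf) := by
    have h1 : IsO1 (fun m => ((S m)⁻¹ - Sinf⁻¹).mulVec (v m)) :=
      hdS.op_bdd hcLL0 hcLL hvbdd
    have h2 : IsO1 (fun m => Sinf⁻¹.mulVec (v m - vinf)) :=
      (IsBdd.const Sinf⁻¹).op_O1 hcLL0 hcLL hvdiff
    refine (h1.add h2).congr 1 (fun m hm => ?_)
    rw [hx_Lf m hm, hxLinf']
    exact sub_decomp _ _ _ _
  have hxLbdd : IsBdd x_L := IsBdd.of_sub x_Linf hxLdiff.bdd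
  -- u m - uinf is O(1/m)
  have hudiff : IsO1 (fun m => u m - uinf) := by
    have h1 : IsO1 (fun m => (K_HL m - K_HLinf).mulVec (x_L m)) :=
      hdHL.op_bdd hcHL0 hcHL hxLbdd
    have h2 : IsO1 (fun m => K_HLinf.mulVec (x_L m - x_Linf)) :=
      (IsBdd.const K_HLinf).op_O1 hcHL0 hcHL hxLdiff
    refine ((h1.add h2).neg).congr 1 (fun m _ => ?_)
    simp only [hu, huinf, Matrix.sub_mulVec, Matrix.mulVec_sub]
    abel
  have hubdd : IsBdd u := IsBdd.of_sub uinf hudiff.bdd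
  -- the constant vector
  have hcHe : c_H • e_H = P.mulVec uinf := by
    rw [huinf, hP, smul_vecMulVec_mulVec, hcH]
  -- conclusion
  have hfinal : IsO1 (fun m => x_H m - c_H • e_H) := by
    have h1 : IsO1 (fun m => (A m - P).mulVec (u m)) :=
      hdA.op_bdd hcHH0 hcHH hubdd
    have h2 : IsO1 (fun m => P.mulVec (u m - uinf)) :=
      (IsBdd.const P).op_O1 hcHH0 hcHH hudiff
    refine (h1.add h2).congr 1 (fun m hm => ?_)
    rw [hx_Hf m hm, hcHe]
    exact sub_decomp _ _ _ _
  obtain ⟨C, M, _, hfin⟩ := hfinal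
  exact ⟨C, M, hfin⟩
end
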